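/- arXiv:quant-ph/0607074 — 3 statements merged into one kernel-verified Lean document; each statement's English description precedes it below -/
import Mathlib

section
/- Fix an integer s ≥ 1. Let A be the formal power series in three commuting variables X, Y, Z with integer coefficients whose coefficient of X^n Y^j Z^i is the number of pairs (c, E) where c : Fin n → Bool is a choice with exactly i indices k satisfying c k = false, and E is a noncrossing contraction with exactly j edges of the word of (a + (a†)^s)^n associated to c. Then A satisfies the functional equation A = 1 + X·Z·A + X·A·(1 + X·Y·Z·A)^s. -/
/-- Two edges `(i,j)` and `(p,q)` cross if `i < p < j < q` or `p < i < q < j`. -/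
def Crosses {N : ℕ} (e f : Fin N × Fin N) : Prop :=
  (e.1 < f.1 ∧ f.1 < e.2 ∧ e.2 < f.2) ∨ (f.1 < e.1 ∧ e.1 < f.2 ∧ f.2 < e.2)

/-- A contraction of the word `w`: a set of edges `(i,j)` with `i < j`, `w i = false` (an `a`),
`w j = true` (an `a†`), whose endpoints are pairwise distinct. -/
def IsContraction {N : ℕ} (w : Fin N → Bool) (E : Finset (Fin N × Fin N)) : Prop :=
  (∀ e ∈ E, e.1 < e.2 ∧ w e.1 = false ∧ w e.2 = true) ∧
  (∀ e ∈ E, ∀ f ∈ E, e ≠ f → e.1 ≠ f.1 ∧ e.1 ≠ f.2 ∧ e.2 ≠ f.1 ∧ e.2 ≠ f.2)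

/-- A set of edges is noncrossing if no two of its edges cross. -/
def IsNoncrossing {N : ℕ} (E : Finset (Fin N × Fin N)) : Prop :=
  ∀ e ∈ E, ∀ f ∈ E, ¬ Crosses e f

/-- The number of noncrossing contractions of `w` with exactly `m` edges. -/
noncomputable def ncCount {N : ℕ} (w : Fin N → Bool) (m : ℕ) : ℕ :=
  Nat.card {E : Finset (Fin N × Fin N) //
    IsContraction w E ∧ IsNoncrossing E ∧ E.card = m}

/-- The word of `(a + (a†)^s)^n` associated to a choice `c : Fin n → Bool`: block `k` consists of
the single letter `a` (`false`) if `c k = false`, and of `s` copies of `a†` (`true`) otherwise. -/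
def wordChoiceAS (s : ℕ) {n : ℕ} (c : Fin n → Bool) : List Bool :=
  (List.ofFn c).flatMap (fun b => if b then List.replicate s true else [false])

/-- The number of pairs `(c, E)` where `c` is a choice for `(a + (a†)^s)^n` with exactly `i`
indices `k` satisfying `c k = false`, and `E` is a noncrossing contraction of the associated
word with exactly `j` edges. -/
noncomputable def pairCountAS (s n j i : ℕ) : ℕ :=
  Nat.card {p : Σ c : Fin n → Bool,
      Finset (Fin (wordChoiceAS s c).length × Fin (wordChoiceAS s c).length) //
    (Finset.univ.filter (fun k => p.1 k = false)).card = i ∧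
    IsContraction (wordChoiceAS s p.1).get p.2 ∧ IsNoncrossing p.2 ∧ p.2.card = j}


namespace Stmt6

open Finset

def XN (e f : ℕ × ℕ) : Prop :=
  (e.1 < f.1 ∧ f.1 < e.2 ∧ e.2 < f.2) ∨ (f.1 < e.1 ∧ e.1 < f.2 ∧ f.2 < e.2)

def CtrN (l : List Bool) (E : Finset (ℕ × ℕ)) : Prop :=
  (∀ e ∈ E, e.1 < e.2 ∧ e.2 < l.length ∧ l.getD e.1 true = false ∧ l.getD e.2 false = true) ∧
  (∀ e ∈ E, ∀ f ∈ E, e ≠ f → e.1 ≠ f.1 ∧ e.1 ≠ f.2 ∧ e.2 ≠ f.1 ∧ e.2 ≠ f.2)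

def NCN (E : Finset (ℕ × ℕ)) : Prop := ∀ e ∈ E, ∀ f ∈ E, ¬ XN e f

noncomputable def cnt (l : List Bool) (m : ℕ) : ℕ :=
  Nat.card {E : Finset (ℕ × ℕ) // CtrN l E ∧ NCN E ∧ E.card = m}

lemma getD_of_lt (l : List α) (d : α) {i : ℕ} (h : i < l.length) : l.getD i d = l[i] := by
  simp [List.getD_eq_getElem?_getD, List.getElem?_eq_getElem h]

instance ctrFinite {l : List Bool} {p : Finset (ℕ × ℕ) → Prop} :
    Finite {E : Finset (ℕ × ℕ) // CtrN l E ∧ p E} := by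
  apply Finite.of_injective
    (fun E => (⟨E.1, by
      simp only [mem_powerset]
      intro e he
      have := E.2.1.1 e he
      simp only [mem_product, mem_range]
      omega⟩ : ↥((range l.length ×ˢ range l.length).powerset)))
  intro a b h
  simp only [Subtype.mk.injEq] at h
  exact Subtype.ext h

def embN (N : ℕ) : Fin N × Fin N ↪ ℕ × ℕ :=
  ⟨fun e => (e.1.1, e.2.1), by
    intro a b h
    simp only [Prod.mk.injEq] at h
    exact Prod.ext (Fin.ext h.1) (Fin.ext h.2)⟩

def pull (N : ℕ) (F : Finset (ℕ × ℕ)) : Finset (Fin N × Fin N) :=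
  (F.subtype fun e => e.1 < N ∧ e.2 < N).map
    ⟨fun x => ((⟨x.1.1, x.2.1⟩ : Fin N), (⟨x.1.2, x.2.2⟩ : Fin N)), by
      intro a b h
      simp only [Prod.mk.injEq, Fin.mk.injEq] at h
      exact Subtype.ext (Prod.ext (by exact h.1) (by exact h.2))⟩

lemma mem_pull {N : ℕ} {F : Finset (ℕ × ℕ)} {a : Fin N × Fin N} :
    a ∈ pull N F ↔ (a.1.1, a.2.1) ∈ F := by
  simp only [pull, Finset.mem_map, Finset.mem_subtype, Function.Embedding.coeFn_mk]
  constructor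
  · rintro ⟨x, hx, rfl⟩; exact hx
  · intro h; exact ⟨⟨(a.1.1, a.2.1), a.1.2, a.2.2⟩, h, rfl⟩

lemma mem_mapN {N : ℕ} {E : Finset (Fin N × Fin N)} {x : ℕ × ℕ} :
    x ∈ E.map (embN N) ↔ ∃ h1 : x.1 < N, ∃ h2 : x.2 < N, (⟨x.1, h1⟩, (⟨x.2, h2⟩ : Fin N)) ∈ E := by
  simp only [Finset.mem_map, embN, Function.Embedding.coeFn_mk]
  constructor
  · rintro ⟨a, ha, rfl⟩; exact ⟨a.1.2, a.2.2, ha⟩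
  · rintro ⟨h1, h2, h⟩; exact ⟨_, h, rfl⟩

lemma ncCount_eq_cnt (l : List Bool) (m : ℕ) : ncCount l.get m = cnt l m := by
  apply Nat.card_congr
  refine ⟨fun E => ⟨E.1.map (embN l.length), ?_⟩, fun F => ⟨pull l.length F.1, ?_⟩, ?_, ?_⟩
  · obtain ⟨E, ⟨hc, hd⟩, hnc, hcard⟩ := E
    refine ⟨⟨?_, ?_⟩, ?_, by rwa [Finset.card_map]⟩
    · intro e he
      rw [mem_mapN] at he
      obtain ⟨h1, h2, he⟩ := he
      obtain ⟨hlt, hw1, hw2⟩ := hc _ he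
      refine ⟨hlt, h2, ?_, ?_⟩
      · rw [getD_of_lt _ _ h1]; exact hw1
      · rw [getD_of_lt _ _ h2]; exact hw2
    · intro e he f hf hef
      rw [mem_mapN] at he hf
      obtain ⟨e1, e2, he⟩ := he
      obtain ⟨f1, f2, hf⟩ := hf
      have := hd _ he _ hf (by
        intro h
        simp only [Prod.ext_iff, Fin.mk.injEq] at h
        exact hef (Prod.ext h.1 h.2))
      simp only [ne_eq, Prod.ext_iff, Fin.ext_iff] at this ⊢
      exact this
    · intro e he f hf
      rw [mem_mapN] at he hf
      obtain ⟨e1, e2, he⟩ := he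
      obtain ⟨f1, f2, hf⟩ := hf
      have := hnc _ he _ hf
      simp only [Crosses, XN, Fin.lt_def, not_or, not_and] at this ⊢
      exact this
  · obtain ⟨F, ⟨hc, hd⟩, hnc, hcard⟩ := F
    have hmem : ∀ a : Fin l.length × Fin l.length, a ∈ pull l.length F ↔ (a.1.1, a.2.1) ∈ F :=
      fun a => mem_pull
    have hpm : F = (pull l.length F).map (embN l.length) := by
      ext x
      rw [mem_mapN]
      constructor
      · intro hx
        obtain ⟨hlt, hlen, -, -⟩ := hc _ hx
        exact ⟨by omega, hlen, by rw [hmem]; exact hx⟩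
      · rintro ⟨h1, h2, h⟩
        rw [hmem] at h; exact h
    refine ⟨⟨?_, ?_⟩, ?_, ?_⟩
    · intro e he
      rw [hmem] at he
      obtain ⟨hlt, hlen, hw1, hw2⟩ := hc _ he
      refine ⟨by rw [Fin.lt_def]; exact hlt, ?_, ?_⟩
      · rw [getD_of_lt _ _ e.1.2] at hw1
        simpa [List.get_eq_getElem] using hw1
      · rw [getD_of_lt _ _ e.2.2] at hw2
        simpa [List.get_eq_getElem] using hw2
    · intro e he f hf hef
      rw [hmem] at he hf
      have := hd _ he _ hf (by
        intro h
        simp only [Prod.ext_iff] at h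
        exact hef (Prod.ext (Fin.ext h.1) (Fin.ext h.2)))
      simp only [ne_eq, Fin.ext_iff]
      exact this
    · intro e he f hf
      rw [hmem] at he hf
      have := hnc _ he _ hf
      simp only [Crosses, XN, Fin.lt_def, not_or, not_and] at this ⊢
      exact this
    · rw [← Finset.card_map (embN l.length), ← hpm]; exact hcard
  · rintro ⟨E, hE⟩
    apply Subtype.ext
    ext a
    simp only [mem_pull, mem_mapN]
    constructor
    · rintro ⟨h1, h2, h⟩
      convert h <;> exact Fin.ext rfl
    · intro h
      exact ⟨a.1.2, a.2.2, by convert h <;> exact Fin.ext rfl⟩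
  · rintro ⟨F, ⟨hc, hd⟩, h⟩
    apply Subtype.ext
    ext x
    simp only [mem_mapN, mem_pull]
    constructor
    · rintro ⟨h1, h2, hx⟩; exact hx
    · intro hx
      obtain ⟨hlt, hlen, -, -⟩ := hc _ hx
      exact ⟨by omega, hlen, hx⟩


lemma getD_append_lt {l l' : List α} {i : ℕ} (h : i < l.length) (d : α) :
    (l ++ l').getD i d = l.getD i d := by
  simp [List.getD_eq_getElem?_getD, List.getElem?_append_left h]

lemma getD_append_ge {l l' : List α} {i : ℕ} (h : l.length ≤ i) (d : α) :
    (l ++ l').getD i d = l'.getD (i - l.length) d := by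
  simp [List.getD_eq_getElem?_getD, List.getElem?_append_right h]

lemma getD_take {l : List α} {p i : ℕ} (h : i < p) (d : α) :
    (l.take p).getD i d = l.getD i d := by
  simp [List.getD_eq_getElem?_getD, List.getElem?_take, h]

lemma getD_drop {l : List α} (q i : ℕ) (d : α) :
    (l.drop q).getD i d = l.getD (q + i) d := by
  simp [List.getD_eq_getElem?_getD, List.getElem?_drop]

def shiftE (k : ℕ) (E : Finset (ℕ × ℕ)) : Finset (ℕ × ℕ) :=
  E.map ⟨fun e => (e.1 + k, e.2 + k), by
    intro a b h
    simp only [Prod.mk.injEq] at h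
    exact Prod.ext (by omega) (by omega)⟩

lemma mem_shiftE {k : ℕ} {E : Finset (ℕ × ℕ)} {x : ℕ × ℕ} :
    x ∈ shiftE k E ↔ k ≤ x.1 ∧ k ≤ x.2 ∧ (x.1 - k, x.2 - k) ∈ E := by
  simp only [shiftE, Finset.mem_map, Function.Embedding.coeFn_mk]
  constructor
  · rintro ⟨e, he, rfl⟩
    show k ≤ e.1 + k ∧ k ≤ e.2 + k ∧ (e.1 + k - k, e.2 + k - k) ∈ E
    simpa using he
  · rintro ⟨h1, h2, h⟩; exact ⟨_, h, Prod.ext (Nat.sub_add_cancel h1) (Nat.sub_add_cancel h2)⟩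

lemma card_shiftE (k : ℕ) (E : Finset (ℕ × ℕ)) : (shiftE k E).card = E.card :=
  Finset.card_map _

lemma ctr_take {l : List Bool} {p : ℕ} (hp : p ≤ l.length) (E : Finset (ℕ × ℕ)) :
    CtrN (l.take p) E ↔ CtrN l E ∧ ∀ e ∈ E, e.2 < p := by
  constructor
  · rintro ⟨h1, h2⟩
    have hb : ∀ e ∈ E, e.1 < e.2 ∧ e.2 < p := by
      intro e he
      have := h1 e he
      simp only [List.length_take] at this
      omega
    refine ⟨⟨?_, h2⟩, fun e he => (hb e he).2⟩
    intro e he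
    obtain ⟨-, -, hw1, hw2⟩ := h1 e he
    obtain ⟨hlt, hlp⟩ := hb e he
    rw [getD_take (by omega) true] at hw1
    rw [getD_take (by omega) false] at hw2
    exact ⟨hlt, by omega, hw1, hw2⟩
  · rintro ⟨⟨h1, h2⟩, hb⟩
    refine ⟨?_, h2⟩
    intro e he
    obtain ⟨hlt, hlen, hw1, hw2⟩ := h1 e he
    have := hb e he
    refine ⟨hlt, by simp [List.length_take]; omega, ?_, ?_⟩
    · rw [getD_take (by omega) true]; exact hw1
    · rw [getD_take (by omega) false]; exact hw2

lemma ctr_drop_shift {l : List Bool} (q : ℕ) (E : Finset (ℕ × ℕ)) :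
    CtrN (l.drop q) E ↔ CtrN l (shiftE q E) := by
  constructor
  · rintro ⟨h1, h2⟩
    constructor
    · intro e he
      rw [mem_shiftE] at he
      obtain ⟨hk1, hk2, he⟩ := he
      obtain ⟨hlt, hlen, hw1, hw2⟩ := h1 _ he
      rw [getD_drop] at hw1 hw2
      simp only [List.length_drop] at hlen
      constructor; · omega
      constructor; · omega
      constructor
      · convert hw1 using 2; omega
      · convert hw2 using 2; omega
    · intro e he f hf hef
      rw [mem_shiftE] at he hf
      obtain ⟨he1, he2, he⟩ := he
      obtain ⟨hf1, hf2, hf⟩ := hf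
      have := h2 _ he _ hf (by
        intro h; apply hef
        simp only [Prod.ext_iff] at h ⊢
        omega)
      omega
  · rintro ⟨h1, h2⟩
    constructor
    · intro e he
      have hm : (e.1 + q, e.2 + q) ∈ shiftE q E := by
        rw [mem_shiftE]; simpa using he
      obtain ⟨hlt, hlen, hw1, hw2⟩ := h1 _ hm
      simp only [List.length_drop]
      refine ⟨by omega, by omega, ?_, ?_⟩
      · rw [getD_drop]; convert hw1 using 2; omega
      · rw [getD_drop]; convert hw2 using 2; omega
    · intro e he f hf hef
      have hme : (e.1 + q, e.2 + q) ∈ shiftE q E := by rw [mem_shiftE]; simpa using he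
      have hmf : (f.1 + q, f.2 + q) ∈ shiftE q E := by rw [mem_shiftE]; simpa using hf
      have := h2 _ hme _ hmf (by
        intro h; apply hef
        simp only [Prod.ext_iff] at h ⊢
        omega)
      simp only [ne_eq] at this ⊢
      omega

lemma ncn_shift {q : ℕ} {E : Finset (ℕ × ℕ)} : NCN E ↔ NCN (shiftE q E) := by
  constructor
  · intro h e he f hf
    rw [mem_shiftE] at he hf
    have := h _ he.2.2 _ hf.2.2
    simp only [XN, not_or, not_and] at this ⊢
    omega
  · intro h e he f hf
    have hme : (e.1 + q, e.2 + q) ∈ shiftE q E := by rw [mem_shiftE]; simpa using he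
    have hmf : (f.1 + q, f.2 + q) ∈ shiftE q E := by rw [mem_shiftE]; simpa using hf
    have := h _ hme _ hmf
    simp only [XN, not_or, not_and] at this ⊢
    omega

lemma ncn_subset {E F : Finset (ℕ × ℕ)} (h : F ⊆ E) (hE : NCN E) : NCN F :=
  fun e he f hf => hE e (h he) f (h hf)

lemma ctr_append_false {l : List Bool} (E : Finset (ℕ × ℕ)) :
    CtrN (l ++ [false]) E ↔ CtrN l E := by
  constructor
  · rintro ⟨h1, h2⟩
    refine ⟨?_, h2⟩
    intro e he
    obtain ⟨hlt, hlen, hw1, hw2⟩ := h1 e he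
    simp only [List.length_append, List.length_cons, List.length_nil] at hlen
    have h2lt : e.2 < l.length := by
      by_contra h
      rw [getD_append_ge (by omega)] at hw2
      have : e.2 - l.length = 0 := by omega
      rw [this] at hw2
      simp at hw2
    rw [getD_append_lt (by omega)] at hw1
    rw [getD_append_lt (by omega)] at hw2
    exact ⟨hlt, h2lt, hw1, hw2⟩
  · rintro ⟨h1, h2⟩
    refine ⟨?_, h2⟩
    intro e he
    obtain ⟨hlt, hlen, hw1, hw2⟩ := h1 e he
    rw [← getD_append_lt (l' := [false]) (by omega) true] at hw1
    rw [← getD_append_lt (l' := [false]) (by omega) false] at hw2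
    refine ⟨hlt, by simp; omega, hw1, hw2⟩


section R2
open Finset

lemma ctr_subset {l : List Bool} {E F : Finset (ℕ × ℕ)} (h : F ⊆ E) (hE : CtrN l E) :
    CtrN l F :=
  ⟨fun e he => hE.1 e (h he), fun e he f hf => hE.2 e (h he) f (h hf)⟩

lemma ctr_unappend_true {l : List Bool} {E : Finset (ℕ × ℕ)}
    (hE : CtrN (l ++ [true]) E) (h : ∀ e ∈ E, e.2 ≠ l.length) : CtrN l E := by
  refine ⟨?_, hE.2⟩
  intro e he
  obtain ⟨hlt, hlen, hw1, hw2⟩ := hE.1 e he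
  simp only [List.length_append, List.length_cons, List.length_nil] at hlen
  have h2 : e.2 < l.length := by have := h e he; omega
  rw [getD_append_lt (by omega)] at hw1
  rw [getD_append_lt (by omega)] at hw2
  exact ⟨hlt, h2, hw1, hw2⟩

lemma ctr_append_true_lift {l : List Bool} {E : Finset (ℕ × ℕ)} (hE : CtrN l E) :
    CtrN (l ++ [true]) E := by
  refine ⟨?_, hE.2⟩
  intro e he
  obtain ⟨hlt, hlen, hw1, hw2⟩ := hE.1 e he
  rw [← getD_append_lt (l' := [true]) (by omega) true] at hw1
  rw [← getD_append_lt (l' := [true]) (by omega) false] at hw2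
  refine ⟨hlt, by simp; omega, hw1, hw2⟩

def glue (N p : ℕ) (E1 E2 : Finset (ℕ × ℕ)) : Finset (ℕ × ℕ) :=
  insert (p, N) (E1 ∪ shiftE (p + 1) E2)

lemma mem_glue {N p : ℕ} {E1 E2 : Finset (ℕ × ℕ)} {x : ℕ × ℕ} :
    x ∈ glue N p E1 E2 ↔ x = (p, N) ∨ x ∈ E1 ∨ x ∈ shiftE (p + 1) E2 := by
  simp [glue]

lemma glue_good {l : List Bool} {p : ℕ} (hp : p < l.length) (hw : l.getD p true = false)
    {E1 E2 : Finset (ℕ × ℕ)} (h1 : CtrN (l.take p) E1) (hn1 : NCN E1)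
    (h2 : CtrN (l.drop (p + 1)) E2) (hn2 : NCN E2) :
    CtrN (l ++ [true]) (glue l.length p E1 E2) ∧ NCN (glue l.length p E1 E2) ∧
      (glue l.length p E1 E2).card = E1.card + E2.card + 1 := by
  set N := l.length with hN
  obtain ⟨hc1, hbd1⟩ := (ctr_take (le_of_lt hp) E1).1 h1
  have hc2 : CtrN l (shiftE (p + 1) E2) := (ctr_drop_shift (p + 1) E2).1 h2
  have hlo : ∀ e ∈ shiftE (p + 1) E2, p + 1 ≤ e.1 ∧ p + 1 ≤ e.2 := by
    intro e he
    rw [mem_shiftE] at he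
    exact ⟨he.1, he.2.1⟩
  -- basic numeric info for each member
  have hinfo : ∀ x ∈ glue N p E1 E2,
      (x = (p, N)) ∨ (x ∈ E1 ∧ x.1 < x.2 ∧ x.2 < p) ∨
        (x ∈ shiftE (p + 1) E2 ∧ p + 1 ≤ x.1 ∧ x.1 < x.2 ∧ x.2 < N) := by
    intro x hx
    rcases mem_glue.1 hx with h | h | h
    · exact Or.inl h
    · exact Or.inr (Or.inl ⟨h, (hc1.1 x h).1, hbd1 x h⟩)
    · exact Or.inr (Or.inr ⟨h, (hlo x h).1, (hc2.1 x h).1, (hc2.1 x h).2.1⟩)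
  refine ⟨⟨?_, ?_⟩, ?_, ?_⟩
  · intro e he
    rcases hinfo e he with rfl | ⟨hm, hb⟩ | ⟨hm, hb⟩
    · refine ⟨hp, by simp [hN], ?_, ?_⟩
      · rw [getD_append_lt hp]; exact hw
      · rw [getD_append_ge (le_refl N)]
        simp [hN]
    · obtain ⟨-, -, hw1, hw2⟩ := hc1.1 _ hm
      have hlen := (hc1.1 _ hm).2.1
      rw [← getD_append_lt (l' := [true]) (by omega) true] at hw1
      rw [← getD_append_lt (l' := [true]) (by omega) false] at hw2
      exact ⟨by omega, by simp; omega, hw1, hw2⟩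
    · obtain ⟨-, -, hw1, hw2⟩ := hc2.1 _ hm
      have hlen := (hc2.1 _ hm).2.1
      rw [← getD_append_lt (l' := [true]) (by omega) true] at hw1
      rw [← getD_append_lt (l' := [true]) (by omega) false] at hw2
      exact ⟨by omega, by simp; omega, hw1, hw2⟩
  · intro e he f hf hef
    rcases hinfo e he with rfl | ⟨hme, hbe⟩ | ⟨hme, hbe⟩ <;>
      rcases hinfo f hf with rfl | ⟨hmf, hbf⟩ | ⟨hmf, hbf⟩
    · exact absurd rfl hef
    · simp only [ne_eq]; omega
    · simp only [ne_eq]; omega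
    · simp only [ne_eq]; omega
    · exact hc1.2 e hme f hmf hef
    · simp only [ne_eq]; omega
    · simp only [ne_eq]; omega
    · simp only [ne_eq]; omega
    · exact hc2.2 e hme f hmf hef
  · intro e he f hf
    have hnc1 := hn1
    have hnc2 : NCN (shiftE (p + 1) E2) := ncn_shift.1 hn2
    rcases hinfo e he with rfl | ⟨hme, hbe⟩ | ⟨hme, hbe⟩ <;>
      rcases hinfo f hf with rfl | ⟨hmf, hbf⟩ | ⟨hmf, hbf⟩
    · simp only [XN, not_or, not_and]; omega
    · simp only [XN, not_or, not_and]; omega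
    · simp only [XN, not_or, not_and]; omega
    · simp only [XN, not_or, not_and]; omega
    · exact hnc1 e hme f hmf
    · simp only [XN, not_or, not_and]; omega
    · simp only [XN, not_or, not_and]; omega
    · simp only [XN, not_or, not_and]; omega
    · exact hnc2 e hme f hmf
  · have hdisj : Disjoint E1 (shiftE (p + 1) E2) := by
      rw [Finset.disjoint_left]
      intro a ha1 ha2
      have b1 := hbd1 a ha1
      have b2 := (hlo a ha2).1
      have := (hc1.1 a ha1).1
      omega
    have hnm : (p, N) ∉ E1 ∪ shiftE (p + 1) E2 := by
      intro hmem
      rcases Finset.mem_union.1 hmem with h | h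
      · have := hbd1 _ h
        simp only at this
        omega
      · have := (hc2.1 _ h).2.1
        simp only at this
        omega
    rw [glue, Finset.card_insert_of_notMem hnm, Finset.card_union_of_disjoint hdisj,
      card_shiftE]

end R2

section R3
open Finset

def Wl (l : List Bool) : Finset ℕ :=
  (Finset.range l.length).filter fun p => l.getD p true = false

abbrev MF (l : List Bool) (m : ℕ) := {E : Finset (ℕ × ℕ) // CtrN l E ∧ NCN E ∧ E.card = m}

instance (l : List Bool) (m : ℕ) : Finite (MF l m) := ctrFinite

abbrev mcT (l : List Bool) (p m : ℕ) := {x : Finset (ℕ × ℕ) × Finset (ℕ × ℕ) //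
  (CtrN (l.take p) x.1 ∧ NCN x.1) ∧ (CtrN (l.drop (p + 1)) x.2 ∧ NCN x.2) ∧
  x.1.card + x.2.card + 1 = m}

noncomputable def mc (l : List Bool) (p m : ℕ) : ℕ := Nat.card (mcT l p m)

instance (l : List Bool) (p m : ℕ) : Finite (mcT l p m) := by
  apply Finite.of_injective
    (β := {E // CtrN (l.take p) E ∧ NCN E} × {E // CtrN (l.drop (p + 1)) E ∧ NCN E})
    (fun x : mcT l p m => (⟨x.1.1, x.2.1⟩, ⟨x.1.2, x.2.2.1⟩))
  intro a b h
  simp only [Prod.ext_iff, Subtype.ext_iff] at h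
  exact Subtype.ext (Prod.ext h.1 h.2)

lemma card_sigma' {ι : Type*} [Fintype ι] (f : ι → Type*) [∀ i, Finite (f i)] :
    Nat.card (Σ i, f i) = ∑ i, Nat.card (f i) := by
  letI : ∀ i, Fintype (f i) := fun i => Fintype.ofFinite _
  simp [Nat.card_eq_fintype_card, Fintype.card_sigma]

def glueMF (l : List Bool) (m : ℕ) (p : ↥(Wl l)) (x : mcT l p.1 m) : MF (l ++ [true]) m := by
  have hp : p.1 < l.length ∧ l.getD p.1 true = false := by
    have := p.2
    simp only [Wl, Finset.mem_filter, Finset.mem_range] at this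
    exact this
  have hg := glue_good hp.1 hp.2 x.2.1.1 x.2.1.2 x.2.2.1.1 x.2.2.1.2
  exact ⟨glue l.length p.1 x.1.1 x.1.2, hg.1, hg.2.1, by rw [hg.2.2]; exact x.2.2.2⟩

def bigE (l : List Bool) (m : ℕ) : (MF l m ⊕ Σ p : ↥(Wl l), mcT l p.1 m) → MF (l ++ [true]) m :=
  Sum.elim (fun E => ⟨E.1, ctr_append_true_lift E.2.1, E.2.2.1, E.2.2.2⟩)
    (fun y => glueMF l m y.1 y.2)

lemma glue_rec1 {N p : ℕ} {E1 E2 : Finset (ℕ × ℕ)} (hp : p < N)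
    (hb1 : ∀ e ∈ E1, e.1 < e.2 ∧ e.2 < p)
    (hb2 : ∀ e ∈ shiftE (p + 1) E2, p + 1 ≤ e.1 ∧ e.1 < e.2) :
    (glue N p E1 E2).filter (fun f => f.2 < p) = E1 := by
  ext x
  simp only [Finset.mem_filter, mem_glue]
  constructor
  · rintro ⟨h | h | h, hx⟩
    · rw [h] at hx; simp only at hx; omega
    · exact h
    · have := hb2 x h; omega
  · intro h
    exact ⟨Or.inr (Or.inl h), (hb1 x h).2⟩

lemma glue_rec2 {N p : ℕ} {E1 E2 : Finset (ℕ × ℕ)} (hp : p < N)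
    (hb1 : ∀ e ∈ E1, e.1 < e.2 ∧ e.2 < p)
    (hb2 : ∀ e ∈ shiftE (p + 1) E2, p + 1 ≤ e.1 ∧ e.1 < e.2) :
    (glue N p E1 E2).filter (fun f => p < f.1) = shiftE (p + 1) E2 := by
  ext x
  simp only [Finset.mem_filter, mem_glue]
  constructor
  · rintro ⟨h | h | h, hx⟩
    · rw [h] at hx; simp only at hx; omega
    · have := hb1 x h; omega
    · exact h
  · intro h
    have := hb2 x h
    exact ⟨Or.inr (Or.inr h), by omega⟩

lemma shift_inj {k : ℕ} {E F : Finset (ℕ × ℕ)} (h : shiftE k E = shiftE k F) : E = F := by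
  ext x
  have : (x.1 + k, x.2 + k) ∈ shiftE k E ↔ (x.1 + k, x.2 + k) ∈ shiftE k F := by rw [h]
  simp only [mem_shiftE] at this
  simpa [Nat.add_sub_cancel] using this

lemma mcT_bounds {l : List Bool} {p m : ℕ} (hp : p < l.length) (x : mcT l p m) :
    (∀ e ∈ x.1.1, e.1 < e.2 ∧ e.2 < p) ∧
    (∀ e ∈ shiftE (p + 1) x.1.2, p + 1 ≤ e.1 ∧ e.1 < e.2 ∧ e.2 < l.length) := by
  obtain ⟨hc1, hbd1⟩ := (ctr_take (le_of_lt hp) x.1.1).1 x.2.1.1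
  have hc2 : CtrN l (shiftE (p + 1) x.1.2) := (ctr_drop_shift (p + 1) x.1.2).1 x.2.2.1.1
  constructor
  · exact fun e he => ⟨(hc1.1 e he).1, hbd1 e he⟩
  · intro e he
    have h1 := (mem_shiftE.1 he).1
    have h2 := hc2.1 e he
    exact ⟨h1, h2.1, h2.2.1⟩

lemma bigE_bijective (l : List Bool) (m : ℕ) : Function.Bijective (bigE l m) := by
  constructor
  · rintro (⟨E, hE⟩ | ⟨⟨p, hpW⟩, x⟩) (⟨F, hF⟩ | ⟨⟨q, hqW⟩, y⟩) h <;>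
      simp only [bigE, Sum.elim_inl, Sum.elim_inr, glueMF, Subtype.mk.injEq] at h
    · simp only [Sum.inl.injEq]
      exact Subtype.ext h
    · -- inl = glue : contradiction
      exfalso
      have hq : q < l.length ∧ l.getD q true = false := by
        simpa [Wl, Finset.mem_filter, Finset.mem_range] using hqW
      have hmem : (q, l.length) ∈ glue l.length q y.1.1 y.1.2 := Finset.mem_insert_self _ _
      rw [← h] at hmem
      have := hE.1.1 _ hmem
      simp only at this
      omega
    · exfalso
      have hp : p < l.length ∧ l.getD p true = false := by
        simpa [Wl, Finset.mem_filter, Finset.mem_range] using hpW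
      have hmem : (p, l.length) ∈ glue l.length p x.1.1 x.1.2 := Finset.mem_insert_self _ _
      rw [h] at hmem
      have := hF.1.1 _ hmem
      simp only at this
      omega
    · have hp : p < l.length ∧ l.getD p true = false := by
        simpa [Wl, Finset.mem_filter, Finset.mem_range] using hpW
      have hq : q < l.length ∧ l.getD q true = false := by
        simpa [Wl, Finset.mem_filter, Finset.mem_range] using hqW
      obtain ⟨hbx1, hbx2⟩ := mcT_bounds hp.1 x
      obtain ⟨hby1, hby2⟩ := mcT_bounds hq.1 y
      have hpq : p = q := by
        have hmem : (p, l.length) ∈ glue l.length q y.1.1 y.1.2 := by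
          rw [← h]; exact Finset.mem_insert_self _ _
        rcases mem_glue.1 hmem with h' | h' | h'
        · exact (Prod.ext_iff.1 h').1
        · have := hby1 _ h'; simp only at this; omega
        · have := hby2 _ h'; simp only at this; omega
      subst hpq
      have h1 : x.1.1 = y.1.1 := by
        rw [← glue_rec1 hp.1 hbx1 (fun e he => ⟨(hbx2 e he).1, (hbx2 e he).2.1⟩),
          ← glue_rec1 hp.1 hby1 (fun e he => ⟨(hby2 e he).1, (hby2 e he).2.1⟩), h]
      have h2 : x.1.2 = y.1.2 := by
        apply shift_inj (k := p + 1)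
        rw [← glue_rec2 hp.1 hbx1 (fun e he => ⟨(hbx2 e he).1, (hbx2 e he).2.1⟩),
          ← glue_rec2 hp.1 hby1 (fun e he => ⟨(hby2 e he).1, (hby2 e he).2.1⟩), h]
      exact congrArg Sum.inr (Sigma.ext rfl (heq_of_eq (Subtype.ext (Prod.ext h1 h2))))
  · rintro ⟨E, hc, hn, hcard⟩
    by_cases hex : ∃ e ∈ E, e.2 = l.length
    · obtain ⟨⟨p, q⟩, he0, hN⟩ := hex
      simp only at hN
      subst hN
      set N := l.length with hNdef
      have hcE := hc.1 _ he0
      simp only at hcE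
      have hpN : p < N := by
        have := hcE.1
        omega
      have hwp : l.getD p true = false := by
        have := hcE.2.2.1
        rwa [getD_append_lt hpN] at this
      have huniq : ∀ f ∈ E, f ≠ (p, N) → f.2 < N ∧ f.1 ≠ p ∧ f.2 ≠ p := by
        intro f hf hne
        have hd := hc.2 f hf (p, N) he0 hne
        have hb := hc.1 f hf
        simp only [List.length_append, List.length_cons, List.length_nil] at hb
        have : f.2 ≠ N := hd.2.2.2
        exact ⟨by omega, hd.1, hd.2.2.1⟩
      have htri : ∀ f ∈ E, f ≠ (p, N) → (f.1 < p ∧ f.2 < p) ∨ (p < f.1) := by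
        intro f hf hne
        obtain ⟨hfN, hf1, hf2⟩ := huniq f hf hne
        have hb := hc.1 f hf
        have hx := hn f hf (p, N) he0
        simp only [XN, not_or, not_and] at hx
        omega
      set E1 := E.filter (fun f => f.2 < p) with hE1def
      set S := E.filter (fun f => p < f.1) with hSdef
      set E2 := S.image (fun f => (f.1 - (p + 1), f.2 - (p + 1))) with hE2def
      have hSbound : ∀ f ∈ S, p + 1 ≤ f.1 ∧ f.1 < f.2 ∧ f.2 < N := by
        intro f hf
        rw [hSdef, Finset.mem_filter] at hf
        have hne : f ≠ (p, N) := by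
          intro hh
          rw [hh] at hf
          simp only at hf
          omega
        have := huniq f hf.1 hne
        have hb := hc.1 f hf.1
        exact ⟨by omega, hb.1, this.1⟩
      have hSeq : shiftE (p + 1) E2 = S := by
        ext x
        rw [mem_shiftE]
        constructor
        · rintro ⟨h1, h2, h3⟩
          rw [hE2def, Finset.mem_image] at h3
          obtain ⟨f, hf, hfx⟩ := h3
          have hfb := hSbound f hf
          simp only [Prod.ext_iff] at hfx
          have : f = x := by
            apply Prod.ext <;> omega
          rwa [← this]
        · intro hx
          have := hSbound x hx
          refine ⟨by omega, by omega, ?_⟩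
          rw [hE2def, Finset.mem_image]
          exact ⟨x, hx, rfl⟩
      have hglue : glue N p E1 E2 = E := by
        ext x
        rw [mem_glue, hSeq]
        constructor
        · rintro (rfl | h | h)
          · exact he0
          · exact Finset.mem_of_mem_filter _ h
          · exact Finset.mem_of_mem_filter _ h
        · intro hx
          by_cases hne : x = (p, N)
          · exact Or.inl hne
          · rcases htri x hx hne with h | h
            · exact Or.inr (Or.inl (Finset.mem_filter.2 ⟨hx, h.2⟩))
            · exact Or.inr (Or.inr (Finset.mem_filter.2 ⟨hx, h⟩))
      have hE1sub : E1 ⊆ E := Finset.filter_subset _ _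
      have hE1b : ∀ e ∈ E1, e.2 ≠ N := by
        intro e he
        rw [hE1def, Finset.mem_filter] at he
        omega
      have hE1ctr : CtrN l E1 := ctr_unappend_true (ctr_subset hE1sub hc) hE1b
      have hE1take : CtrN (l.take p) E1 := by
        rw [ctr_take (le_of_lt hpN)]
        exact ⟨hE1ctr, fun e he => (Finset.mem_filter.1 he).2⟩
      have hSctr : CtrN l S := by
        apply ctr_unappend_true (ctr_subset (Finset.filter_subset _ _) hc)
        intro e he
        have := hSbound e he
        omega
      have hE2ctr : CtrN (l.drop (p + 1)) E2 := by
        rw [ctr_drop_shift, hSeq]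
        exact hSctr
      have hE1ncn : NCN E1 := ncn_subset hE1sub hn
      have hE2ncn : NCN E2 := by
        apply (ncn_shift (q := p + 1) (E := E2)).2
        rw [hSeq]
        exact ncn_subset (Finset.filter_subset _ _) hn
      have hcardg := (glue_good hpN hwp hE1take hE1ncn hE2ctr hE2ncn).2.2
      rw [hglue, hcard] at hcardg
      refine ⟨Sum.inr ⟨⟨p, ?_⟩, ⟨(E1, E2), ⟨hE1take, hE1ncn⟩, ⟨hE2ctr, hE2ncn⟩, hcardg.symm⟩⟩, ?_⟩
      · rw [Wl, Finset.mem_filter, Finset.mem_range]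
        exact ⟨hpN, hwp⟩
      · simp only [bigE, Sum.elim_inr, glueMF]
        exact Subtype.ext hglue
    · push_neg at hex
      refine ⟨Sum.inl ⟨E, ctr_unappend_true hc hex, hn, hcard⟩, ?_⟩
      simp only [bigE, Sum.elim_inl]

lemma cnt_eq_card_MF (l : List Bool) (m : ℕ) : cnt l m = Nat.card (MF l m) := rfl

lemma cnt_append_true (l : List Bool) (m : ℕ) :
    cnt (l ++ [true]) m = cnt l m + ∑ p ∈ Wl l, mc l p m := by
  rw [cnt_eq_card_MF, ← Nat.card_congr (Equiv.ofBijective _ (bigE_bijective l m)),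
    Nat.card_sum, card_sigma']
  rw [cnt_eq_card_MF]
  congr 1
  rw [← Finset.sum_attach (Wl l) (fun p => mc l p m)]
  rfl

lemma cnt_append_false (l : List Bool) (m : ℕ) : cnt (l ++ [false]) m = cnt l m :=
  Nat.card_congr (Equiv.subtypeEquivRight fun E => by rw [ctr_append_false])

end R3

section Poly
open Finset Polynomial

lemma cnt_eq_zero_of_lt {l : List Bool} {m : ℕ} (h : l.length < m) : cnt l m = 0 := by
  have : IsEmpty {E : Finset (ℕ × ℕ) // CtrN l E ∧ NCN E ∧ E.card = m} := by
    constructor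
    rintro ⟨E, hc, -, hcard⟩
    have hinj : Set.InjOn Prod.fst (E : Set (ℕ × ℕ)) := by
      intro e he f hf hef
      by_contra hne
      exact (hc.2 e he f hf hne).1 hef
    have hsub : ∀ e ∈ E, e.1 ∈ Finset.range l.length := by
      intro e he
      have := hc.1 e he
      simp only [Finset.mem_range]
      omega
    have := Finset.card_le_card_of_injOn Prod.fst hsub hinj
    simp only [Finset.card_range] at this
    omega
  simp [cnt, Nat.card_of_isEmpty]

noncomputable def G (l : List Bool) : Polynomial ℕ :=
  ∑ m ∈ Finset.range (l.length + 1), Polynomial.C (cnt l m) * Polynomial.X ^ m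

lemma coeff_G (l : List Bool) (m : ℕ) : (G l).coeff m = cnt l m := by
  rw [G, Polynomial.finset_sum_coeff]
  simp only [Polynomial.coeff_C_mul, Polynomial.coeff_X_pow, mul_ite, mul_one, mul_zero]
  rw [Finset.sum_ite_eq (Finset.range (l.length + 1)) m (fun k => cnt l k)]
  split
  · rfl
  · next h =>
    rw [Finset.mem_range] at h
    exact (cnt_eq_zero_of_lt (by omega)).symm

lemma G_append_false (l : List Bool) : G (l ++ [false]) = G l := by
  apply Polynomial.ext
  intro m
  rw [coeff_G, coeff_G, cnt_append_false]

lemma card_conv {α β : Type*} (P : α → Prop) (Q : β → Prop)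
    [Finite {a // P a}] [Finite {b // Q b}] (sa : α → ℕ) (sb : β → ℕ) (m : ℕ) :
    Nat.card {x : α × β // (P x.1 ∧ Q x.2) ∧ sa x.1 + sb x.2 = m} =
    ∑ q ∈ Finset.HasAntidiagonal.antidiagonal m,
      Nat.card {a // P a ∧ sa a = q.1} * Nat.card {b // Q b ∧ sb b = q.2} := by
  classical
  have hfinA : ∀ c : ℕ, Finite {a // P a ∧ sa a = c} := by
    intro c
    apply Finite.of_injective (β := {a // P a}) (fun z => ⟨z.1, z.2.1⟩)
    intro a b h
    simpa [Subtype.ext_iff] using h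
  have hfinB : ∀ c : ℕ, Finite {b // Q b ∧ sb b = c} := by
    intro c
    apply Finite.of_injective (β := {b // Q b}) (fun z => ⟨z.1, z.2.1⟩)
    intro a b h
    simpa [Subtype.ext_iff] using h
  let T := {x : α × β // (P x.1 ∧ Q x.2) ∧ sa x.1 + sb x.2 = m}
  let f : T → ↥(Finset.HasAntidiagonal.antidiagonal m) := fun x =>
    ⟨(sa x.1.1, sb x.1.2), by rw [Finset.HasAntidiagonal.mem_antidiagonal]; exact x.2.2⟩
  have fibEq : ∀ q : ↥(Finset.HasAntidiagonal.antidiagonal m),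
      {x : T // f x = q} ≃ ({a // P a ∧ sa a = q.1.1} × {b // Q b ∧ sb b = q.1.2}) := by
    intro q
    refine ⟨fun z => (⟨z.1.1.1, z.1.2.1.1, ?_⟩, ⟨z.1.1.2, z.1.2.1.2, ?_⟩),
      fun x => ⟨⟨(x.1.1, x.2.1), ⟨x.1.2.1, x.2.2.1⟩, ?_⟩, ?_⟩, fun z => ?_, fun x => ?_⟩
    · have := congrArg (fun y : ↥(Finset.HasAntidiagonal.antidiagonal m) => (y : ℕ × ℕ).1) z.2
      exact this
    · have := congrArg (fun y : ↥(Finset.HasAntidiagonal.antidiagonal m) => (y : ℕ × ℕ).2) z.2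
      exact this
    · have hq := Finset.HasAntidiagonal.mem_antidiagonal.1 q.2
      rw [x.1.2.2, x.2.2.2]
      exact hq
    · apply Subtype.ext
      apply Prod.ext
      · exact x.1.2.2
      · exact x.2.2.2
    · apply Subtype.ext
      apply Subtype.ext
      rfl
    · rfl
  haveI : ∀ q, Finite {x : T // f x = q} := fun q => Finite.of_equiv _ (fibEq q).symm
  have h1 : Nat.card T = ∑ q : ↥(Finset.HasAntidiagonal.antidiagonal m), Nat.card {x : T // f x = q} := by
    rw [← card_sigma']
    exact Nat.card_congr (Equiv.sigmaFiberEquiv f).symm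
  rw [h1]
  rw [← Finset.sum_attach (Finset.HasAntidiagonal.antidiagonal m)
    (fun q => Nat.card {a // P a ∧ sa a = q.1} * Nat.card {b // Q b ∧ sb b = q.2})]
  apply Finset.sum_congr rfl
  intro q _
  rw [Nat.card_congr (fibEq q), Nat.card_prod]

lemma mc_zero (l : List Bool) (p : ℕ) : mc l p 0 = 0 := by
  have : IsEmpty (mcT l p 0) := by
    constructor
    rintro ⟨x, -, -, hs⟩
    omega
  simp [mc, Nat.card_of_isEmpty]

lemma mc_succ (l : List Bool) (p m : ℕ) :
    mc l p (m + 1) =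
      ∑ q ∈ Finset.HasAntidiagonal.antidiagonal m, cnt (l.take p) q.1 * cnt (l.drop (p + 1)) q.2 := by
  rw [mc]
  have e1 : mcT l p (m + 1) ≃
      {x : Finset (ℕ × ℕ) × Finset (ℕ × ℕ) //
        ((fun E => CtrN (l.take p) E ∧ NCN E) x.1 ∧ (fun E => CtrN (l.drop (p + 1)) E ∧ NCN E) x.2)
          ∧ x.1.card + x.2.card = m} := by
    apply Equiv.subtypeEquivRight
    intro x
    constructor
    · rintro ⟨h1, h2, h3⟩
      exact ⟨⟨h1, h2⟩, by omega⟩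
    · rintro ⟨⟨h1, h2⟩, h3⟩
      exact ⟨h1, h2, by omega⟩
  rw [Nat.card_congr e1,
    @card_conv (Finset (ℕ × ℕ)) (Finset (ℕ × ℕ)) (fun E => CtrN (l.take p) E ∧ NCN E)
      (fun E => CtrN (l.drop (p + 1)) E ∧ NCN E) ctrFinite ctrFinite
      Finset.card Finset.card m]
  apply Finset.sum_congr rfl
  intro q _
  congr 1
  · rw [cnt]
    apply Nat.card_congr
    apply Equiv.subtypeEquivRight
    intro E
    tauto
  · rw [cnt]
    apply Nat.card_congr
    apply Equiv.subtypeEquivRight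
    intro E
    tauto

lemma mc_coeff (l : List Bool) (p m : ℕ) :
    mc l p m = (Polynomial.X * (G (l.take p) * G (l.drop (p + 1)))).coeff m := by
  cases m with
  | zero => simp [mc_zero, Polynomial.coeff_X_mul_zero]
  | succ m =>
    rw [Polynomial.coeff_X_mul, Polynomial.coeff_mul, mc_succ]
    apply Finset.sum_congr rfl
    intro q _
    rw [coeff_G, coeff_G]

lemma G_append_true (l : List Bool) :
    G (l ++ [true]) = G l + Polynomial.X * ∑ p ∈ Wl l, G (l.take p) * G (l.drop (p + 1)) := by
  apply Polynomial.ext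
  intro m
  rw [coeff_G, cnt_append_true, Polynomial.coeff_add, coeff_G, Finset.mul_sum,
    Polynomial.finset_sum_coeff]
  congr 1
  apply Finset.sum_congr rfl
  intro p _
  rw [mc_coeff]

noncomputable def St : ℕ → List Bool → Polynomial ℕ
  | 0, l => G l
  | t + 1, l => ∑ p ∈ Wl l, G (l.take p) * St t (l.drop (p + 1))

lemma Wl_append_replicate (l : List Bool) (s : ℕ) :
    Wl (l ++ List.replicate s true) = Wl l := by
  ext p
  simp only [Wl, Finset.mem_filter, Finset.mem_range, List.length_append,
    List.length_replicate]
  constructor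
  · rintro ⟨hlen, hw⟩
    by_cases hp : p < l.length
    · rw [getD_append_lt hp] at hw
      exact ⟨hp, hw⟩
    · exfalso
      rw [getD_append_ge (by omega)] at hw
      rcases lt_or_ge (p - l.length) s with h | h
      · rw [getD_of_lt _ _ (by simpa using h)] at hw
        simp at hw
      · rw [List.getD_eq_default _ _ (by simpa using h)] at hw
        simp at hw
  · rintro ⟨hlen, hw⟩
    rw [getD_append_lt hlen]
    exact ⟨by omega, hw⟩

lemma G_append_replicate (s : ℕ) (l : List Bool) :
    G (l ++ List.replicate s true) =
      ∑ t ∈ Finset.range (s + 1),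
        Polynomial.C (s.choose t) * Polynomial.X ^ t * St t l := by
  induction s generalizing l with
  | zero => simp [St]
  | succ s ih =>
    have hrep : List.replicate (s + 1) true = List.replicate s true ++ [true] :=
      List.replicate_succ' (n := s) (a := true)
    rw [hrep, ← List.append_assoc, G_append_true, ih, Wl_append_replicate]
    have htd : ∀ p ∈ Wl l,
        G ((l ++ List.replicate s true).take p) * G ((l ++ List.replicate s true).drop (p + 1))
        = G (l.take p) * G (l.drop (p + 1) ++ List.replicate s true) := by
      intro p hp
      have hpl : p < l.length := by
        have := (Finset.mem_filter.1 hp).1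
        simpa [Wl] using this
      rw [List.take_append_of_le_length (by omega), List.drop_append_of_le_length (by omega)]
    rw [Finset.sum_congr rfl htd]
    have hexp : ∀ p ∈ Wl l,
        G (l.take p) * G (l.drop (p + 1) ++ List.replicate s true) =
        ∑ t ∈ Finset.range (s + 1),
          Polynomial.C (s.choose t) * Polynomial.X ^ t * (G (l.take p) * St t (l.drop (p + 1))) := by
      intro p hp
      rw [ih, Finset.mul_sum]
      apply Finset.sum_congr rfl
      intro t _
      ring
    rw [Finset.sum_congr rfl hexp, Finset.sum_comm]
    have hSt : ∀ t, ∑ p ∈ Wl l, G (l.take p) * St t (l.drop (p + 1)) = St (t + 1) l :=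
      fun t => rfl
    have : (Polynomial.X : Polynomial ℕ) *
        ∑ t ∈ Finset.range (s + 1), ∑ p ∈ Wl l,
          Polynomial.C (s.choose t) * Polynomial.X ^ t * (G (l.take p) * St t (l.drop (p + 1)))
        = ∑ t ∈ Finset.range (s + 1),
            Polynomial.C (s.choose t) * Polynomial.X ^ (t + 1) * St (t + 1) l := by
      rw [Finset.mul_sum]
      apply Finset.sum_congr rfl
      intro t _
      rw [← hSt t, Finset.mul_sum, Finset.mul_sum]
      apply Finset.sum_congr rfl
      intro p _
      ring
    rw [this]
    -- Pascal recombination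
    have key : ∀ x : ℕ, (Polynomial.C ((s + 1).choose (x + 1)) : Polynomial ℕ)
        = Polynomial.C (s.choose x) + Polynomial.C (s.choose (x + 1)) := by
      intro x
      rw [← map_add]
      congr 1
    have e0 : ∑ t ∈ Finset.range (s + 1 + 1), Polynomial.C ((s + 1).choose t) * Polynomial.X ^ t * St t l
        = (∑ x ∈ Finset.range (s + 1), Polynomial.C ((s + 1).choose (x + 1)) * Polynomial.X ^ (x + 1) * St (x + 1) l)
          + Polynomial.C 1 * Polynomial.X ^ 0 * St 0 l := by
      rw [Finset.sum_range_succ' (fun t => Polynomial.C ((s + 1).choose t) * Polynomial.X ^ t * St t l) (s + 1)]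
      simp
    have e1 : (∑ x ∈ Finset.range (s + 1), Polynomial.C ((s + 1).choose (x + 1)) * Polynomial.X ^ (x + 1) * St (x + 1) l)
        = (∑ x ∈ Finset.range (s + 1), Polynomial.C (s.choose x) * Polynomial.X ^ (x + 1) * St (x + 1) l)
          + ∑ x ∈ Finset.range (s + 1), Polynomial.C (s.choose (x + 1)) * Polynomial.X ^ (x + 1) * St (x + 1) l := by
      rw [← Finset.sum_add_distrib]
      apply Finset.sum_congr rfl
      intro x _
      rw [key]
      ring
    have hlast : s.choose (s + 1) = 0 := Nat.choose_eq_zero_of_lt (by omega)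
    have e2 : (∑ x ∈ Finset.range (s + 1), Polynomial.C (s.choose (x + 1)) * Polynomial.X ^ (x + 1) * St (x + 1) l)
        = ∑ x ∈ Finset.range s, Polynomial.C (s.choose (x + 1)) * Polynomial.X ^ (x + 1) * St (x + 1) l := by
      rw [Finset.sum_range_succ, hlast]
      simp
    have e3 : (∑ t ∈ Finset.range (s + 1), Polynomial.C (s.choose t) * Polynomial.X ^ t * St t l)
        = (∑ x ∈ Finset.range s, Polynomial.C (s.choose (x + 1)) * Polynomial.X ^ (x + 1) * St (x + 1) l)
          + Polynomial.C 1 * Polynomial.X ^ 0 * St 0 l := by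
      rw [Finset.sum_range_succ' (fun t => Polynomial.C (s.choose t) * Polynomial.X ^ t * St t l) s]
      simp
    rw [e0, e1, e2, e3]
    ring

end Poly

section Word
open Finset

variable (s : ℕ)

def blk (b : Bool) : List Bool := if b then List.replicate s true else [false]

def wd (c : List Bool) : List Bool := c.flatMap (blk s)

def off (c : List Bool) (k : ℕ) : ℕ := (wd s (c.take k)).length

lemma wd_nil : wd s [] = [] := rfl

lemma wd_cons (b : Bool) (c : List Bool) : wd s (b :: c) = blk s b ++ wd s c := rfl

lemma wd_append (u v : List Bool) : wd s (u ++ v) = wd s u ++ wd s v := by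
  simp [wd]

lemma blk_length (hs : 1 ≤ s) (b : Bool) : 1 ≤ (blk s b).length := by
  cases b <;> simp [blk] <;> omega

lemma Wl_append (u v : List Bool) :
    Wl (u ++ v) = Wl u ∪ (Wl v).image (· + u.length) := by
  ext p
  simp only [Wl, Finset.mem_union, Finset.mem_image, Finset.mem_filter, Finset.mem_range,
    List.length_append]
  constructor
  · rintro ⟨hlen, hw⟩
    by_cases hp : p < u.length
    · rw [getD_append_lt hp] at hw
      exact Or.inl ⟨hp, hw⟩
    · rw [getD_append_ge (by omega)] at hw
      exact Or.inr ⟨p - u.length, ⟨by omega, hw⟩, by omega⟩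
  · rintro (⟨hlen, hw⟩ | ⟨q, ⟨hlen, hw⟩, rfl⟩)
    · rw [getD_append_lt hlen]
      exact ⟨by omega, hw⟩
    · rw [getD_append_ge (by omega), Nat.add_sub_cancel]
      exact ⟨by omega, hw⟩

lemma Wl_blk_true : Wl (blk s true) = ∅ := by
  ext p
  simp only [Wl, blk, if_pos, Finset.mem_filter, Finset.mem_range, Finset.notMem_empty,
    iff_false, not_and, List.length_replicate]
  intro hp
  rw [getD_of_lt _ _ (by simpa using hp)]
  simp

lemma Wl_single_false : Wl [false] = {0} := by
  ext p
  simp only [Wl, Finset.mem_filter, Finset.mem_range, Finset.mem_singleton]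
  constructor
  · rintro ⟨h1, -⟩
    simpa using Nat.lt_one_iff.1 (by simpa using h1)
  · rintro rfl
    exact ⟨by simp, by simp [List.getD]⟩

lemma Wl_blk_false : Wl (blk s false) = {0} := Wl_single_false

lemma Wl_single_true : Wl [true] = ∅ := by
  ext p
  simp only [Wl, Finset.mem_filter, Finset.mem_range, Finset.notMem_empty, iff_false, not_and]
  intro hp
  have : p = 0 := by simpa using Nat.lt_one_iff.1 (by simpa using hp)
  subst this
  simp [List.getD]

lemma off_zero (c : List Bool) : off s c 0 = 0 := rfl

lemma off_cons_succ (b : Bool) (c : List Bool) (k : ℕ) :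
    off s (b :: c) (k + 1) = (blk s b).length + off s c k := by
  simp [off, wd_cons, List.take_succ_cons]

lemma Wl_wd (c : List Bool) : Wl (wd s c) = (Wl c).image (off s c) := by
  induction c with
  | nil =>
    simp [wd_nil, Wl]
  | cons b c ih =>
    have hsplit : Wl (b :: c) = Wl ([b] ++ c) := rfl
    rw [wd_cons, Wl_append, ih, hsplit, Wl_append, Finset.image_union, Finset.image_image,
      Finset.image_image]
    congr 1
    · cases b
      · rw [Wl_blk_false, Wl_single_false]
        ext p
        simp only [Finset.mem_image, Finset.mem_singleton]
        constructor
        · rintro rfl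
          exact ⟨0, rfl, (off_zero s (false :: c)).symm⟩
        · rintro ⟨q, rfl, rfl⟩
          exact (off_zero s (false :: c))
      · rw [Wl_blk_true, Wl_single_true]
        simp
    · apply Finset.image_congr
      intro k hk
      simp only [Function.comp_apply, List.length_cons, List.length_nil]
      rw [off_cons_succ]
      omega

lemma off_succ (c : List Bool) (k : ℕ) (hk : k < c.length) :
    off s c (k + 1) = off s c k + (blk s (c.getD k true)).length := by
  rw [off, off, List.take_succ]
  have hsome : getElem? c k = some (c.getD k true) := by
    rw [List.getElem?_eq_getElem hk, getD_of_lt _ _ hk]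
  rw [hsome]
  simp [wd_append, Option.toList, wd]

lemma off_strict (hs : 1 ≤ s) (c : List Bool) {k1 k2 : ℕ} (h : k1 < k2) (h2 : k2 ≤ c.length) :
    off s c k1 < off s c k2 := by
  induction k2 with
  | zero => omega
  | succ m ih =>
    have hm : m < c.length := by omega
    have hstep : off s c m < off s c (m + 1) := by
      rw [off_succ s c m hm]
      have := blk_length s hs (c.getD m true)
      omega
    rcases Nat.lt_or_ge k1 m with h' | h'
    · exact lt_trans (ih h' (by omega)) hstep
    · have : k1 = m := by omega
      subst this
      exact hstep

lemma off_le_length (c : List Bool) (k : ℕ) : off s c k ≤ (wd s c).length := by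
  rw [off]
  have : c = c.take k ++ c.drop k := (List.take_append_drop k c).symm
  conv_rhs => rw [this]
  rw [wd_append, List.length_append]
  omega

lemma wd_take_off (c : List Bool) (k : ℕ) :
    (wd s c).take (off s c k) = wd s (c.take k) := by
  have : wd s c = wd s (c.take k) ++ wd s (c.drop k) := by
    rw [← wd_append, List.take_append_drop]
  rw [this, off, List.take_left]

lemma list_split_at_false {c : List Bool} {k : ℕ} (hk : k < c.length)
    (hw : c.getD k true = false) :
    c = c.take k ++ false :: c.drop (k + 1) := by
  conv_lhs => rw [← List.take_append_drop k c]
  congr 1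
  rw [List.drop_eq_getElem_cons hk]
  rw [getD_of_lt _ _ hk] at hw
  rw [hw]

lemma wd_drop_off {c : List Bool} {k : ℕ} (hk : k < c.length)
    (hw : c.getD k true = false) :
    (wd s c).drop (off s c k + 1) = wd s (c.drop (k + 1)) := by
  have hsplit : c = c.take k ++ false :: c.drop (k + 1) := list_split_at_false hk hw
  have hw2 : wd s c = (wd s (c.take k) ++ [false]) ++ wd s (c.drop (k + 1)) := by
    conv_lhs => rw [hsplit]
    rw [wd_append, List.append_assoc]
    congr 1
  have hl : off s c k + 1 = (wd s (c.take k) ++ [false]).length := by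
    simp [off]
  rw [hw2, hl, List.drop_left]

end Word

section Choice
open Finset Polynomial

lemma ofFn_inj {n : ℕ} : Function.Injective (List.ofFn : (Fin n → Bool) → List Bool) := by
  intro a b h
  funext k
  have := congrArg (fun l : List Bool => l.getD k.1 true) h
  simpa [List.getD_eq_getElem?_getD, List.getElem?_ofFn, k.2] using this

def BL (n : ℕ) : Finset (List Bool) :=
  (Finset.univ : Finset (Fin n → Bool)).map ⟨List.ofFn, ofFn_inj⟩

lemma mem_BL {n : ℕ} {l : List Bool} : l ∈ BL n ↔ l.length = n := by
  simp only [BL, Finset.mem_map, Finset.mem_univ, true_and, Function.Embedding.coeFn_mk]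
  constructor
  · rintro ⟨c, rfl⟩
    simp
  · rintro rfl
    exact ⟨fun i => l[i], List.ofFn_getElem (xs := l)⟩

noncomputable def Pl (s n j i : ℕ) : ℕ :=
  ∑ l ∈ BL n, if (Wl l).card = i then cnt (wd s l) j else 0

noncomputable def TTl (s t n i j : ℕ) : ℕ :=
  ∑ l ∈ BL n, if (Wl l).card = i then (St t (wd s l)).coeff j else 0

lemma Pl_eq_TTl0 (s n j i : ℕ) : Pl s n j i = TTl s 0 n i j := by
  unfold Pl TTl
  apply Finset.sum_congr rfl
  intro l _
  rw [show St 0 (wd s l) = G (wd s l) from rfl, coeff_G]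

lemma Wl_ofFn {n : ℕ} (c : Fin n → Bool) :
    Wl (List.ofFn c) = (Finset.univ.filter (fun k => c k = false)).image Fin.val := by
  ext p
  simp only [Wl, Finset.mem_filter, Finset.mem_range, List.length_ofFn, Finset.mem_image,
    Finset.mem_univ, true_and]
  constructor
  · rintro ⟨hp, hw⟩
    refine ⟨⟨p, hp⟩, ?_, rfl⟩
    rw [getD_of_lt _ _ (by simpa using hp)] at hw
    simpa using hw
  · rintro ⟨k, hk, rfl⟩
    refine ⟨by simpa using k.2, ?_⟩
    rw [getD_of_lt _ _ (by simpa using k.2)]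
    simpa using hk

lemma cf_eq {n : ℕ} (c : Fin n → Bool) :
    (Finset.univ.filter (fun k => c k = false)).card = (Wl (List.ofFn c)).card := by
  rw [Wl_ofFn, Finset.card_image_of_injective _ Fin.val_injective]

lemma pairCount_sum (s n j i : ℕ) :
    pairCountAS s n j i =
      ∑ c : Fin n → Bool,
        if (Finset.univ.filter (fun k => c k = false)).card = i
          then cnt (wd s (List.ofFn c)) j else 0 := by
  rw [pairCountAS]
  have e1 : {p : Σ c : Fin n → Bool,
      Finset (Fin (wordChoiceAS s c).length × Fin (wordChoiceAS s c).length) //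
      (Finset.univ.filter (fun k => p.1 k = false)).card = i ∧
      IsContraction (wordChoiceAS s p.1).get p.2 ∧ IsNoncrossing p.2 ∧ p.2.card = j} ≃
      Σ c : Fin n → Bool, {E : Finset (Fin (wordChoiceAS s c).length × Fin (wordChoiceAS s c).length) //
        (Finset.univ.filter (fun k => c k = false)).card = i ∧
        IsContraction (wordChoiceAS s c).get E ∧ IsNoncrossing E ∧ E.card = j} :=
    ⟨fun x => ⟨x.1.1, x.1.2, x.2⟩, fun y => ⟨⟨y.1, y.2.1⟩, y.2.2⟩,
      fun x => rfl, fun y => rfl⟩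
  rw [Nat.card_congr e1, card_sigma']
  apply Finset.sum_congr rfl
  intro c _
  by_cases hc : (Finset.univ.filter (fun k => c k = false)).card = i
  · rw [if_pos hc]
    have e2 : {E : Finset (Fin (wordChoiceAS s c).length × Fin (wordChoiceAS s c).length) //
        (Finset.univ.filter (fun k => c k = false)).card = i ∧
        IsContraction (wordChoiceAS s c).get E ∧ IsNoncrossing E ∧ E.card = j} ≃
        {E : Finset (Fin (wordChoiceAS s c).length × Fin (wordChoiceAS s c).length) //
        IsContraction (wordChoiceAS s c).get E ∧ IsNoncrossing E ∧ E.card = j} :=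
      Equiv.subtypeEquivRight (fun E => by simp [hc])
    rw [Nat.card_congr e2]
    have : wordChoiceAS s c = wd s (List.ofFn c) := rfl
    rw [show Nat.card {E : Finset (Fin (wordChoiceAS s c).length × Fin (wordChoiceAS s c).length) //
        IsContraction (wordChoiceAS s c).get E ∧ IsNoncrossing E ∧ E.card = j}
      = ncCount (wordChoiceAS s c).get j from rfl]
    rw [this] at *
    exact ncCount_eq_cnt _ _
  · rw [if_neg hc]
    have : IsEmpty {E : Finset (Fin (wordChoiceAS s c).length × Fin (wordChoiceAS s c).length) //
        (Finset.univ.filter (fun k => c k = false)).card = i ∧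
        IsContraction (wordChoiceAS s c).get E ∧ IsNoncrossing E ∧ E.card = j} := by
      constructor
      rintro ⟨E, h1, -⟩
      exact hc h1
    exact Nat.card_of_isEmpty

lemma pairCount_eq_Pl (s n j i : ℕ) : pairCountAS s n j i = Pl s n j i := by
  rw [pairCount_sum, Pl, BL, Finset.sum_map]
  apply Finset.sum_congr rfl
  intro c _
  rw [cf_eq]
  rfl

lemma sum_BL_succ {M : Type*} [AddCommMonoid M] (n : ℕ) (f : List Bool → M) :
    ∑ l ∈ BL (n + 1), f l = ∑ l ∈ BL n, (f (l ++ [false]) + f (l ++ [true])) := by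
  rw [BL, BL, Finset.sum_map, Finset.sum_map]
  simp only [Function.Embedding.coeFn_mk]
  have hsum := Fintype.sum_equiv
    (⟨fun x => Fin.snoc x.1 x.2, fun c => (Fin.init c, c (Fin.last n)),
      fun x => by simp [Fin.init_snoc, Fin.snoc_last],
      fun c => by simp [Fin.snoc_init_self]⟩ : (Fin n → Bool) × Bool ≃ (Fin (n + 1) → Bool))
    (fun x => f (List.ofFn (Fin.snoc x.1 x.2))) (fun c => f (List.ofFn c)) (fun x => rfl)
  rw [← hsum, Fintype.sum_prod_type]
  apply Finset.sum_congr rfl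
  intro c _
  rw [Fintype.sum_bool]
  have hofn : ∀ b : Bool, List.ofFn (Fin.snoc c b : Fin (n + 1) → Bool) = List.ofFn c ++ [b] := by
    intro b
    rw [List.ofFn_succ']
    simp only [Fin.snoc_castSucc, Fin.snoc_last, List.concat_eq_append]
  rw [hofn true, hofn false]
  exact add_comm _ _

lemma Wl_card_append_false (l : List Bool) :
    (Wl (l ++ [false])).card = (Wl l).card + 1 := by
  rw [Wl_append, Wl_single_false, Finset.image_singleton]
  simp only [zero_add]
  rw [Finset.card_union_of_disjoint]
  · simp
  · simp only [Finset.disjoint_singleton_right]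
    intro h
    have := (Finset.mem_filter.1 h).1
    simp at this

lemma Wl_card_append_true (s : ℕ) (l : List Bool) :
    (Wl (l ++ List.replicate s true)).card = (Wl l).card := by
  rw [Wl_append_replicate]

lemma coeff_C_mul_X_pow_mul (a t : ℕ) (f : Polynomial ℕ) (j : ℕ) :
    (Polynomial.C a * Polynomial.X ^ t * f).coeff j =
      if t ≤ j then a * f.coeff (j - t) else 0 := by
  rw [mul_assoc, Polynomial.coeff_C_mul, mul_comm (Polynomial.X ^ t) f,
    Polynomial.coeff_mul_X_pow']
  simp [mul_ite]

lemma P_succ (s : ℕ) (n j i : ℕ) :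
    Pl s (n + 1) j i = (if 1 ≤ i then Pl s n j (i - 1) else 0)
      + ∑ t ∈ Finset.range (s + 1),
          (if t ≤ j then s.choose t * TTl s t n i (j - t) else 0) := by
  rw [Pl, sum_BL_succ n (fun l => if (Wl l).card = i then cnt (wd s l) j else 0),
    Finset.sum_add_distrib]
  congr 1
  · -- false block
    have hterm : ∀ l ∈ BL n,
        (if (Wl (l ++ [false])).card = i then cnt (wd s (l ++ [false])) j else 0)
        = (if 1 ≤ i then (if (Wl l).card = i - 1 then cnt (wd s l) j else 0) else 0) := by
      intro l _
      have hwd : wd s (l ++ [false]) = wd s l ++ [false] := by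
        rw [wd_append]
        rfl
      rw [Wl_card_append_false, hwd, cnt_append_false]
      cases i with
      | zero => simp
      | succ i' =>
        simp only [Nat.succ_le_iff, if_pos (Nat.succ_pos i'), Nat.add_sub_cancel]
        by_cases h : (Wl l).card = i'
        · rw [if_pos h, if_pos (by omega)]
        · rw [if_neg h, if_neg (by omega)]
    rw [Finset.sum_congr rfl hterm]
    split
    · rfl
    · simp
  · -- true block
    have hterm : ∀ l ∈ BL n,
        (if (Wl (l ++ [true])).card = i then cnt (wd s (l ++ [true])) j else 0)
        = ∑ t ∈ Finset.range (s + 1),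
            (if (Wl l).card = i then
              (if t ≤ j then s.choose t * (St t (wd s l)).coeff (j - t) else 0) else 0) := by
      intro l _
      have hwd : wd s (l ++ [true]) = wd s l ++ List.replicate s true := by
        rw [wd_append]
        simp [wd, blk]
      have hWl : Wl (l ++ [true]) = Wl l := by
        have : (l ++ [true] : List Bool) = l ++ List.replicate 1 true := by simp
        rw [this, Wl_append_replicate]
      rw [hWl, hwd, ← coeff_G, G_append_replicate, Polynomial.finset_sum_coeff]
      rw [Finset.sum_congr rfl (fun t _ => coeff_C_mul_X_pow_mul (s.choose t) t (St t (wd s l)) j)]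
      split
      · rfl
      · simp
    rw [Finset.sum_congr rfl hterm, Finset.sum_comm]
    apply Finset.sum_congr rfl
    intro t _
    split
    · -- t ≤ j
      rw [TTl, Finset.mul_sum]
      apply Finset.sum_congr rfl
      intro l _
      split
      · rfl
      · simp
    · simp

end Choice

section Split
open Finset Polynomial

lemma cnt_nil (j : ℕ) : cnt [] j = if j = 0 then 1 else 0 := by
  split
  · next h =>
    subst h
    haveI : Unique {E : Finset (ℕ × ℕ) // CtrN [] E ∧ NCN E ∧ E.card = 0} :=
      { default := ⟨∅, ⟨fun e he => absurd he (Finset.notMem_empty e),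
          fun e he => absurd he (Finset.notMem_empty e)⟩,
          fun e he => absurd he (Finset.notMem_empty e), Finset.card_empty⟩,
        uniq := fun E => Subtype.ext (Finset.card_eq_zero.1 E.2.2.2) }
    exact Nat.card_unique
  · next h =>
    exact cnt_eq_zero_of_lt (by simp; omega)

lemma BL_zero : BL 0 = {[]} := by
  ext l
  rw [mem_BL]
  simp [List.length_eq_zero_iff]

lemma Wl_nil : Wl [] = ∅ := by
  simp [Wl]

lemma Pl_zero (s j i : ℕ) : Pl s 0 j i = if j = 0 ∧ i = 0 then 1 else 0 := by
  rw [Pl, BL_zero, Finset.sum_singleton, Wl_nil]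
  rw [show wd s [] = [] from rfl, cnt_nil]
  simp only [Finset.card_empty]
  by_cases hi : i = 0 <;> by_cases hj : j = 0 <;> simp [hi, hj]
  · omega

lemma St_nil (t : ℕ) : St (t + 1) [] = 0 := by
  show ∑ p ∈ Wl [], _ = 0
  rw [Wl_nil, Finset.sum_empty]

lemma TTl_zero_n (s t i j : ℕ) : TTl s (t + 1) 0 i j = 0 := by
  rw [TTl, BL_zero, Finset.sum_singleton]
  rw [show wd s [] = [] from rfl, St_nil]
  simp

lemma TTl_zero_i (s t n j : ℕ) : TTl s (t + 1) n 0 j = 0 := by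
  rw [TTl]
  apply Finset.sum_eq_zero
  intro l _
  split
  · next h =>
    have hWl : Wl l = ∅ := Finset.card_eq_zero.1 h
    have : St (t + 1) (wd s l) = 0 := by
      show ∑ p ∈ Wl (wd s l), _ = 0
      rw [Wl_wd, hWl]
      simp
    rw [this]
    simp
  · rfl

private lemma sigeq {a a' : List Bool} {b b' : ℕ} (h1 : a = a') (h2 : b = b') :
    (⟨a, b⟩ : Σ _ : List Bool, ℕ) = ⟨a', b'⟩ := by
  subst h1; subst h2; rfl

lemma split_sum {M : Type*} [AddCommMonoid M] (n : ℕ) (F : List Bool → List Bool → M) :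
    ∑ l ∈ BL (n + 1), ∑ k ∈ Wl l, F (l.take k) (l.drop (k + 1))
      = ∑ x ∈ Finset.HasAntidiagonal.antidiagonal n, ∑ l1 ∈ BL x.1, ∑ l2 ∈ BL x.2, F l1 l2 := by
  have hL : ∑ l ∈ BL (n + 1), ∑ k ∈ Wl l, F (l.take k) (l.drop (k + 1))
      = ∑ p ∈ (BL (n + 1)).sigma (fun l => Wl l), F (p.1.take p.2) (p.1.drop (p.2 + 1)) := by
    rw [Finset.sum_sigma]
  have hR : ∑ x ∈ Finset.HasAntidiagonal.antidiagonal n, ∑ l1 ∈ BL x.1, ∑ l2 ∈ BL x.2, F l1 l2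
      = ∑ p ∈ (Finset.HasAntidiagonal.antidiagonal n).sigma (fun x => BL x.1 ×ˢ BL x.2), F p.2.1 p.2.2 := by
    rw [Finset.sum_sigma]
    apply Finset.sum_congr rfl
    intro x _
    rw [Finset.sum_product]
  rw [hL, hR]
  apply Finset.sum_nbij' (i := fun p => (⟨(p.2, n - p.2), (p.1.take p.2, p.1.drop (p.2 + 1))⟩ :
      Σ _ : ℕ × ℕ, List Bool × List Bool))
    (j := fun q => (⟨q.2.1 ++ false :: q.2.2, q.2.1.length⟩ : Σ _ : List Bool, ℕ))
  · intro p hp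
    rw [Finset.mem_sigma] at hp
    obtain ⟨hl, hk⟩ := hp
    rw [mem_BL] at hl
    have hkW := hk
    simp only [Wl, Finset.mem_filter, Finset.mem_range] at hkW
    rw [Finset.mem_sigma, Finset.HasAntidiagonal.mem_antidiagonal, Finset.mem_product, mem_BL, mem_BL]
    dsimp only
    refine ⟨by omega, ?_, ?_⟩
    · rw [List.length_take]
      omega
    · rw [List.length_drop]
      omega
  · intro q hq
    rw [Finset.mem_sigma, Finset.HasAntidiagonal.mem_antidiagonal, Finset.mem_product, mem_BL, mem_BL] at hq
    obtain ⟨hx, h1, h2⟩ := hq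
    rw [Finset.mem_sigma, mem_BL]
    dsimp only
    constructor
    · simp only [List.length_append, List.length_cons]
      omega
    · simp only [Wl, Finset.mem_filter, Finset.mem_range, List.length_append, List.length_cons]
      refine ⟨by omega, ?_⟩
      rw [getD_append_ge (le_refl _), Nat.sub_self]
      rfl
  · intro p hp
    rw [Finset.mem_sigma] at hp
    obtain ⟨hl, hk⟩ := hp
    rw [mem_BL] at hl
    simp only [Wl, Finset.mem_filter, Finset.mem_range] at hk
    apply sigeq
    · exact (list_split_at_false hk.1 hk.2).symm
    · rw [List.length_take]
      omega
  · intro q hq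
    rw [Finset.mem_sigma, Finset.HasAntidiagonal.mem_antidiagonal, Finset.mem_product, mem_BL, mem_BL] at hq
    obtain ⟨hx, h1, h2⟩ := hq
    have ht : (q.2.1 ++ false :: q.2.2).take q.2.1.length = q.2.1 := List.take_left
    have hd : (q.2.1 ++ false :: q.2.2).drop (q.2.1.length + 1) = q.2.2 := by
      rw [show q.2.1 ++ false :: q.2.2 = (q.2.1 ++ [false]) ++ q.2.2 from by simp]
      rw [show q.2.1.length + 1 = (q.2.1 ++ [false]).length from by simp]
      exact List.drop_left
    have hfst : ((q.2.1.length : ℕ), n - q.2.1.length) = q.1 := by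
      have : q.2.1.length = q.1.1 := h1
      apply Prod.ext <;> simp <;> omega
    calc (⟨(q.2.1.length, n - q.2.1.length),
          ((q.2.1 ++ false :: q.2.2).take q.2.1.length,
           (q.2.1 ++ false :: q.2.2).drop (q.2.1.length + 1))⟩ :
        Σ _ : ℕ × ℕ, List Bool × List Bool)
        = ⟨(q.2.1.length, n - q.2.1.length), (q.2.1, q.2.2)⟩ := by rw [ht, hd]
      _ = ⟨q.1, q.2⟩ := by rw [hfst]
      _ = q := rfl
  · intro p hp
    rfl

end Split

section TTsucc
open Finset Polynomial

lemma mem_Wl {l : List Bool} {k : ℕ} :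
    k ∈ Wl l ↔ k < l.length ∧ l.getD k true = false := by
  simp [Wl]

lemma off_injOn (s : ℕ) (hs : 1 ≤ s) (l : List Bool) :
    ∀ k1 ∈ Wl l, ∀ k2 ∈ Wl l, off s l k1 = off s l k2 → k1 = k2 := by
  intro k1 h1 k2 h2 heq
  have b1 : k1 < l.length := (mem_Wl.1 h1).1
  have b2 : k2 < l.length := (mem_Wl.1 h2).1
  rcases lt_trichotomy k1 k2 with h | h | h
  · have := off_strict s hs l h (by omega)
    omega
  · exact h
  · have := off_strict s hs l h (by omega)
    omega

lemma Wl_card_append (u v : List Bool) :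
    (Wl (u ++ v)).card = (Wl u).card + (Wl v).card := by
  rw [Wl_append, Finset.card_union_of_disjoint, Finset.card_image_of_injective _
    (add_left_injective u.length)]
  rw [Finset.disjoint_left]
  intro a ha hb
  have h1 : a < u.length := (mem_Wl.1 ha).1
  rw [Finset.mem_image] at hb
  obtain ⟨q, -, rfl⟩ := hb
  omega

lemma Wl_card_split {l : List Bool} {k : ℕ} (hk : k ∈ Wl l) :
    (Wl l).card = (Wl (l.take k)).card + 1 + (Wl (l.drop (k + 1))).card := by
  obtain ⟨hk1, hk2⟩ := mem_Wl.1 hk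
  conv_lhs => rw [list_split_at_false hk1 hk2]
  rw [show (false :: l.drop (k + 1) : List Bool) = [false] ++ l.drop (k + 1) from rfl]
  rw [Wl_card_append, Wl_card_append, Wl_single_false]
  simp only [Finset.card_singleton]
  omega

lemma conv_ite (a b i X Y : ℕ) :
    (if a + b = i then X * Y else 0)
      = ∑ z ∈ Finset.HasAntidiagonal.antidiagonal i, (if a = z.1 then X else 0) * (if b = z.2 then Y else 0) := by
  have h : ∀ z ∈ Finset.HasAntidiagonal.antidiagonal i,
      (if a = z.1 then X else 0) * (if b = z.2 then Y else 0)
        = if z = (a, b) then X * Y else 0 := by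
    intro z _
    by_cases h1 : a = z.1
    · by_cases h2 : b = z.2
      · rw [if_pos h1, if_pos h2, if_pos (Prod.ext h1.symm h2.symm)]
      · rw [if_neg h2, mul_zero, if_neg]
        intro hz
        exact h2 (by rw [hz])
    · rw [if_neg h1, zero_mul, if_neg]
      intro hz
      exact h1 (by rw [hz])
  rw [Finset.sum_congr rfl h, Finset.sum_ite_eq' (Finset.HasAntidiagonal.antidiagonal i) (a, b) (fun _ => X * Y)]
  simp only [Finset.HasAntidiagonal.mem_antidiagonal]

lemma TTl_succ (s : ℕ) (hs : 1 ≤ s) (t n i j : ℕ) :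
    TTl s (t + 1) (n + 1) (i + 1) j
      = ∑ x ∈ Finset.HasAntidiagonal.antidiagonal n, ∑ y ∈ Finset.HasAntidiagonal.antidiagonal j, ∑ z ∈ Finset.HasAntidiagonal.antidiagonal i,
          Pl s x.1 y.1 z.1 * TTl s t x.2 z.2 y.2 := by
  have hst : ∀ l : List Bool, St (t + 1) (wd s l)
      = ∑ k ∈ Wl l, G (wd s (l.take k)) * St t (wd s (l.drop (k + 1))) := by
    intro l
    show (∑ p ∈ Wl (wd s l), G ((wd s l).take p) * St t ((wd s l).drop (p + 1))) = _
    rw [Wl_wd, Finset.sum_image (off_injOn s hs l)]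
    apply Finset.sum_congr rfl
    intro k hk
    obtain ⟨hk1, hk2⟩ := mem_Wl.1 hk
    rw [wd_take_off, wd_drop_off s hk1 hk2]
  rw [TTl]
  have hterm : ∀ l ∈ BL (n + 1),
      (if (Wl l).card = i + 1 then (St (t + 1) (wd s l)).coeff j else 0)
      = ∑ k ∈ Wl l, (if (Wl (l.take k)).card + (Wl (l.drop (k + 1))).card = i
          then (G (wd s (l.take k)) * St t (wd s (l.drop (k + 1)))).coeff j else 0) := by
    intro l _
    rw [hst l, Polynomial.finset_sum_coeff]
    split
    · next h =>
      apply Finset.sum_congr rfl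
      intro k hk
      rw [if_pos]
      have := Wl_card_split hk
      omega
    · next h =>
      symm
      apply Finset.sum_eq_zero
      intro k hk
      rw [if_neg]
      have := Wl_card_split hk
      omega
  rw [Finset.sum_congr rfl hterm,
    split_sum n (fun u v => if (Wl u).card + (Wl v).card = i
      then (G (wd s u) * St t (wd s v)).coeff j else 0)]
  apply Finset.sum_congr rfl
  intro x _
  have hinner : ∀ l1 ∈ BL x.1, ∀ l2 ∈ BL x.2,
      (if (Wl l1).card + (Wl l2).card = i then (G (wd s l1) * St t (wd s l2)).coeff j else 0)
      = ∑ y ∈ Finset.HasAntidiagonal.antidiagonal j, ∑ z ∈ Finset.HasAntidiagonal.antidiagonal i,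
          (if (Wl l1).card = z.1 then (G (wd s l1)).coeff y.1 else 0) *
          (if (Wl l2).card = z.2 then (St t (wd s l2)).coeff y.2 else 0) := by
    intro l1 _ l2 _
    rw [Polynomial.coeff_mul]
    rw [show (if (Wl l1).card + (Wl l2).card = i
        then ∑ y ∈ Finset.HasAntidiagonal.antidiagonal j, (G (wd s l1)).coeff y.1 * (St t (wd s l2)).coeff y.2
        else 0)
      = ∑ y ∈ Finset.HasAntidiagonal.antidiagonal j,
          (if (Wl l1).card + (Wl l2).card = i
            then (G (wd s l1)).coeff y.1 * (St t (wd s l2)).coeff y.2 else 0) from by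
        split <;> simp]
    apply Finset.sum_congr rfl
    intro y _
    exact conv_ite _ _ _ _ _
  rw [Finset.sum_congr rfl (fun l1 h1 => Finset.sum_congr rfl (fun l2 h2 => hinner l1 h1 l2 h2))]
  -- reorder sums
  have step1 : ∀ l1 ∈ BL x.1,
      (∑ l2 ∈ BL x.2, ∑ y ∈ Finset.HasAntidiagonal.antidiagonal j, ∑ z ∈ Finset.HasAntidiagonal.antidiagonal i,
        (if (Wl l1).card = z.1 then (G (wd s l1)).coeff y.1 else 0) *
        (if (Wl l2).card = z.2 then (St t (wd s l2)).coeff y.2 else 0))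
      = ∑ y ∈ Finset.HasAntidiagonal.antidiagonal j, ∑ z ∈ Finset.HasAntidiagonal.antidiagonal i, ∑ l2 ∈ BL x.2,
        (if (Wl l1).card = z.1 then (G (wd s l1)).coeff y.1 else 0) *
        (if (Wl l2).card = z.2 then (St t (wd s l2)).coeff y.2 else 0) := by
    intro l1 _
    rw [Finset.sum_comm]
    apply Finset.sum_congr rfl
    intro y _
    rw [Finset.sum_comm]
  rw [Finset.sum_congr rfl step1, Finset.sum_comm]
  apply Finset.sum_congr rfl
  intro y _
  rw [Finset.sum_comm]
  apply Finset.sum_congr rfl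
  intro z _
  -- now goal: ∑ l1, ∑ l2, (if ..) * (if ..) = Pl s x.1 y.1 z.1 * TTl s t x.2 z.2 y.2
  rw [Pl, TTl, Finset.sum_mul_sum]
  apply Finset.sum_congr rfl
  intro l1 _
  apply Finset.sum_congr rfl
  intro l2 _
  rw [← coeff_G]

end TTsucc

section PS
open Finset MvPowerSeries

noncomputable def mu (n j i : ℕ) : Fin 3 →₀ ℕ :=
  Finsupp.single 0 n + Finsupp.single 1 j + Finsupp.single 2 i

lemma mu_apply0 (n j i : ℕ) : mu n j i 0 = n := by
  simp [mu, Finsupp.single_apply]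

lemma mu_apply1 (n j i : ℕ) : mu n j i 1 = j := by
  simp [mu, Finsupp.single_apply]

lemma mu_apply2 (n j i : ℕ) : mu n j i 2 = i := by
  simp [mu, Finsupp.single_apply]

lemma fin3_eq (g : Fin 3 →₀ ℕ) : g = mu (g 0) (g 1) (g 2) := by
  ext x
  fin_cases x <;> simp [mu, Finsupp.single_apply]

lemma mu_zero_iff {n j i : ℕ} : mu n j i = 0 ↔ n = 0 ∧ j = 0 ∧ i = 0 := by
  constructor
  · intro h
    refine ⟨?_, ?_, ?_⟩
    · have := congrArg (fun g : Fin 3 →₀ ℕ => g 0) h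
      simpa [mu_apply0] using this
    · have := congrArg (fun g : Fin 3 →₀ ℕ => g 1) h
      simpa [mu_apply1] using this
    · have := congrArg (fun g : Fin 3 →₀ ℕ => g 2) h
      simpa [mu_apply2] using this
  · rintro ⟨rfl, rfl, rfl⟩
    simp [mu]

lemma mu_le {a b c n j i : ℕ} : mu a b c ≤ mu n j i ↔ a ≤ n ∧ b ≤ j ∧ c ≤ i := by
  rw [Finsupp.le_def]
  constructor
  · intro h
    refine ⟨?_, ?_, ?_⟩
    · have := h 0; rwa [mu_apply0, mu_apply0] at this
    · have := h 1; rwa [mu_apply1, mu_apply1] at this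
    · have := h 2; rwa [mu_apply2, mu_apply2] at this
  · rintro ⟨h1, h2, h3⟩ x
    fin_cases x
    · rw [show (⟨0, by omega⟩ : Fin 3) = 0 from rfl, mu_apply0, mu_apply0]; exact h1
    · rw [show (⟨1, by omega⟩ : Fin 3) = 1 from rfl, mu_apply1, mu_apply1]; exact h2
    · rw [show (⟨2, by omega⟩ : Fin 3) = 2 from rfl, mu_apply2, mu_apply2]; exact h3

lemma mu_sub {a b c n j i : ℕ} : mu n j i - mu a b c = mu (n - a) (j - b) (i - c) := by
  ext x
  rw [Finsupp.tsub_apply]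
  fin_cases x
  · rw [show (⟨0, by omega⟩ : Fin 3) = 0 from rfl, mu_apply0, mu_apply0, mu_apply0]
  · rw [show (⟨1, by omega⟩ : Fin 3) = 1 from rfl, mu_apply1, mu_apply1, mu_apply1]
  · rw [show (⟨2, by omega⟩ : Fin 3) = 2 from rfl, mu_apply2, mu_apply2, mu_apply2]

lemma mu_add {a b c n j i : ℕ} : mu a b c + mu n j i = mu (a + n) (b + j) (c + i) := by
  ext x
  rw [Finsupp.add_apply]
  fin_cases x
  · rw [show (⟨0, by omega⟩ : Fin 3) = 0 from rfl, mu_apply0, mu_apply0, mu_apply0]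
  · rw [show (⟨1, by omega⟩ : Fin 3) = 1 from rfl, mu_apply1, mu_apply1, mu_apply1]
  · rw [show (⟨2, by omega⟩ : Fin 3) = 2 from rfl, mu_apply2, mu_apply2, mu_apply2]

lemma coeff_one_mu (n j i : ℕ) :
    MvPowerSeries.coeff (mu n j i) (1 : MvPowerSeries (Fin 3) ℤ)
      = if n = 0 ∧ j = 0 ∧ i = 0 then 1 else 0 := by
  rw [MvPowerSeries.coeff_one]
  by_cases h : n = 0 ∧ j = 0 ∧ i = 0
  · rw [if_pos (mu_zero_iff.2 h), if_pos h]
  · rw [if_neg (fun hh => h (mu_zero_iff.1 hh)), if_neg h]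

lemma coeff_mul_mu (φ ψ : MvPowerSeries (Fin 3) ℤ) (n j i : ℕ) :
    MvPowerSeries.coeff (mu n j i) (φ * ψ)
      = ∑ x ∈ Finset.HasAntidiagonal.antidiagonal n, ∑ y ∈ Finset.HasAntidiagonal.antidiagonal j, ∑ z ∈ Finset.HasAntidiagonal.antidiagonal i,
          MvPowerSeries.coeff (mu x.1 y.1 z.1) φ * MvPowerSeries.coeff (mu x.2 y.2 z.2) ψ := by
  rw [MvPowerSeries.coeff_mul]
  have hR : ∑ x ∈ Finset.HasAntidiagonal.antidiagonal n, ∑ y ∈ Finset.HasAntidiagonal.antidiagonal j, ∑ z ∈ Finset.HasAntidiagonal.antidiagonal i,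
      MvPowerSeries.coeff (mu x.1 y.1 z.1) φ * MvPowerSeries.coeff (mu x.2 y.2 z.2) ψ
      = ∑ w ∈ (Finset.HasAntidiagonal.antidiagonal n) ×ˢ ((Finset.HasAntidiagonal.antidiagonal j) ×ˢ (Finset.HasAntidiagonal.antidiagonal i)),
          MvPowerSeries.coeff (mu w.1.1 w.2.1.1 w.2.2.1) φ *
          MvPowerSeries.coeff (mu w.1.2 w.2.1.2 w.2.2.2) ψ := by
    rw [Finset.sum_product]
    apply Finset.sum_congr rfl
    intro x _
    rw [Finset.sum_product]
  rw [hR]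
  apply Finset.sum_nbij'
    (i := fun p => ((p.1 0, p.2 0), ((p.1 1, p.2 1), (p.1 2, p.2 2))))
    (j := fun w => (mu w.1.1 w.2.1.1 w.2.2.1, mu w.1.2 w.2.1.2 w.2.2.2))
  · intro p hp
    rw [Finset.HasAntidiagonal.mem_antidiagonal] at hp
    simp only [Finset.mem_product, Finset.HasAntidiagonal.mem_antidiagonal]
    have h0 := congrArg (fun g : Fin 3 →₀ ℕ => g 0) hp
    have h1 := congrArg (fun g : Fin 3 →₀ ℕ => g 1) hp
    have h2 := congrArg (fun g : Fin 3 →₀ ℕ => g 2) hp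
    simp only [Finsupp.add_apply, mu_apply0, mu_apply1, mu_apply2] at h0 h1 h2
    exact ⟨h0, h1, h2⟩
  · intro w hw
    simp only [Finset.mem_product, Finset.HasAntidiagonal.mem_antidiagonal] at hw
    rw [Finset.HasAntidiagonal.mem_antidiagonal, mu_add, hw.1, hw.2.1, hw.2.2]
  · intro p hp
    apply Prod.ext
    · exact (fin3_eq p.1).symm
    · exact (fin3_eq p.2).symm
  · intro w hw
    simp only [mu_apply0, mu_apply1, mu_apply2]
  · intro p hp
    rw [← fin3_eq, ← fin3_eq]

lemma ite_sum {M : Type*} [AddCommMonoid M] {α : Type*} (c : Prop) [Decidable c]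
    (s : Finset α) (f : α → M) :
    ∑ a ∈ s, (if c then f a else 0) = if c then ∑ a ∈ s, f a else 0 := by
  split <;> simp

lemma sum_anti_shift {M : Type*} [AddCommMonoid M] (t n : ℕ) (f : ℕ → ℕ → M) :
    (∑ x ∈ Finset.HasAntidiagonal.antidiagonal n, if t ≤ x.2 then f x.1 (x.2 - t) else 0)
      = if t ≤ n then ∑ x ∈ Finset.HasAntidiagonal.antidiagonal (n - t), f x.1 x.2 else 0 := by
  by_cases h : t ≤ n
  · rw [if_pos h, ← Finset.sum_filter]
    apply Finset.sum_nbij' (i := fun x => ((x.1 : ℕ), x.2 - t)) (j := fun x => (x.1, x.2 + t))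
    · intro a ha
      simp only [Finset.mem_filter, Finset.HasAntidiagonal.mem_antidiagonal] at ha ⊢
      omega
    · intro a ha
      simp only [Finset.mem_filter, Finset.HasAntidiagonal.mem_antidiagonal] at ha ⊢
      omega
    · intro a ha
      simp only [Finset.mem_filter, Finset.HasAntidiagonal.mem_antidiagonal] at ha
      apply Prod.ext
      · rfl
      · dsimp only
        omega
    · intro a ha
      simp only [Finset.HasAntidiagonal.mem_antidiagonal] at ha
      apply Prod.ext
      · rfl
      · dsimp only
        omega
    · intro a ha
      rfl
  · rw [if_neg h]
    apply Finset.sum_eq_zero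
    intro x hx
    rw [Finset.HasAntidiagonal.mem_antidiagonal] at hx
    rw [if_neg (by omega)]

lemma coeff_X0_mul (φ : MvPowerSeries (Fin 3) ℤ) (n j i : ℕ) :
    MvPowerSeries.coeff (mu n j i) (MvPowerSeries.X 0 * φ)
      = if 1 ≤ n then MvPowerSeries.coeff (mu (n - 1) j i) φ else 0 := by
  rw [MvPowerSeries.X_def, MvPowerSeries.coeff_monomial_mul]
  have h1 : (Finsupp.single 0 1 : Fin 3 →₀ ℕ) = mu 1 0 0 := by simp [mu]
  rw [h1]
  by_cases h : 1 ≤ n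
  · rw [if_pos (mu_le.2 ⟨h, Nat.zero_le _, Nat.zero_le _⟩), if_pos h, mu_sub, one_mul]
    simp
  · rw [if_neg (fun hh => h (mu_le.1 hh).1), if_neg h]

lemma coeff_X1_mul (φ : MvPowerSeries (Fin 3) ℤ) (n j i : ℕ) :
    MvPowerSeries.coeff (mu n j i) (MvPowerSeries.X 1 * φ)
      = if 1 ≤ j then MvPowerSeries.coeff (mu n (j - 1) i) φ else 0 := by
  rw [MvPowerSeries.X_def, MvPowerSeries.coeff_monomial_mul]
  have h1 : (Finsupp.single 1 1 : Fin 3 →₀ ℕ) = mu 0 1 0 := by simp [mu]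
  rw [h1]
  by_cases h : 1 ≤ j
  · rw [if_pos (mu_le.2 ⟨Nat.zero_le _, h, Nat.zero_le _⟩), if_pos h, mu_sub, one_mul]
    simp
  · rw [if_neg (fun hh => h (mu_le.1 hh).2.1), if_neg h]

lemma coeff_X2_mul (φ : MvPowerSeries (Fin 3) ℤ) (n j i : ℕ) :
    MvPowerSeries.coeff (mu n j i) (MvPowerSeries.X 2 * φ)
      = if 1 ≤ i then MvPowerSeries.coeff (mu n j (i - 1)) φ else 0 := by
  rw [MvPowerSeries.X_def, MvPowerSeries.coeff_monomial_mul]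
  have h1 : (Finsupp.single 2 1 : Fin 3 →₀ ℕ) = mu 0 0 1 := by simp [mu]
  rw [h1]
  by_cases h : 1 ≤ i
  · rw [if_pos (mu_le.2 ⟨Nat.zero_le _, Nat.zero_le _, h⟩), if_pos h, mu_sub, one_mul]
    simp
  · rw [if_neg (fun hh => h (mu_le.1 hh).2.2), if_neg h]

lemma coeff_XXX_mul (φ : MvPowerSeries (Fin 3) ℤ) (n j i : ℕ) :
    MvPowerSeries.coeff (mu n j i)
        (MvPowerSeries.X 0 * MvPowerSeries.X 1 * MvPowerSeries.X 2 * φ)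
      = if 1 ≤ n ∧ 1 ≤ j ∧ 1 ≤ i
          then MvPowerSeries.coeff (mu (n - 1) (j - 1) (i - 1)) φ else 0 := by
  rw [mul_assoc, mul_assoc, coeff_X0_mul]
  by_cases hn : 1 ≤ n
  · rw [if_pos hn, coeff_X1_mul]
    by_cases hj : 1 ≤ j
    · rw [if_pos hj, coeff_X2_mul]
      by_cases hi : 1 ≤ i
      · rw [if_pos hi, if_pos ⟨hn, hj, hi⟩]
      · rw [if_neg hi, if_neg (by tauto)]
    · rw [if_neg hj, if_neg (by tauto)]
  · rw [if_neg hn, if_neg (by tauto)]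

end PS

section Final
open Finset MvPowerSeries

lemma coeff_phi_Wpow (A : MvPowerSeries (Fin 3) ℤ) (t : ℕ) :
    ∀ (φ : MvPowerSeries (Fin 3) ℤ) (n j i : ℕ),
      MvPowerSeries.coeff (mu n j i)
          (φ * (MvPowerSeries.X 0 * MvPowerSeries.X 1 * MvPowerSeries.X 2 * A) ^ t)
        = if t ≤ n ∧ t ≤ j ∧ t ≤ i
            then MvPowerSeries.coeff (mu (n - t) (j - t) (i - t)) (φ * A ^ t) else 0 := by
  induction t with
  | zero =>
    intro φ n j i
    rw [pow_zero, mul_one, if_pos ⟨Nat.zero_le _, Nat.zero_le _, Nat.zero_le _⟩, pow_zero,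
      mul_one]
    simp
  | succ t ih =>
    intro φ n j i
    rw [show φ * (MvPowerSeries.X 0 * MvPowerSeries.X 1 * MvPowerSeries.X 2 * A) ^ (t + 1)
        = MvPowerSeries.X 0 * MvPowerSeries.X 1 * MvPowerSeries.X 2 *
            ((φ * A) * (MvPowerSeries.X 0 * MvPowerSeries.X 1 * MvPowerSeries.X 2 * A) ^ t)
      from by ring]
    rw [coeff_XXX_mul]
    by_cases h : t + 1 ≤ n ∧ t + 1 ≤ j ∧ t + 1 ≤ i
    · rw [if_pos ⟨by omega, by omega, by omega⟩, ih (φ * A),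
        if_pos ⟨by omega, by omega, by omega⟩, if_pos h]
      rw [show φ * A * A ^ t = φ * A ^ (t + 1) from by ring]
      rw [show n - 1 - t = n - (t + 1) from by omega, show j - 1 - t = j - (t + 1) from by omega,
        show i - 1 - t = i - (t + 1) from by omega]
    · rw [if_neg h]
      by_cases h1 : 1 ≤ n ∧ 1 ≤ j ∧ 1 ≤ i
      · rw [if_pos h1, ih (φ * A), if_neg (by omega)]
      · rw [if_neg h1]

lemma TTl_coeff (s : ℕ) (hs : 1 ≤ s) (A : MvPowerSeries (Fin 3) ℤ)
    (hA : ∀ n j i : ℕ, MvPowerSeries.coeff (mu n j i) A = (Pl s n j i : ℤ)) :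
    ∀ t n i j : ℕ, (TTl s t n i j : ℤ)
      = if t ≤ n ∧ t ≤ i
          then MvPowerSeries.coeff (mu (n - t) j (i - t)) (A ^ (t + 1)) else 0 := by
  intro t
  induction t with
  | zero =>
    intro n i j
    simp only [Nat.sub_zero, Nat.zero_add, pow_one]
    rw [if_pos ⟨Nat.zero_le _, Nat.zero_le _⟩, hA, ← Pl_eq_TTl0]
  | succ t ih =>
    intro n i j
    match n, i with
    | 0, i =>
      rw [TTl_zero_n, if_neg (by omega)]
      simp
    | (n + 1), 0 =>
      rw [TTl_zero_i, if_neg (by omega)]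
      simp
    | (n + 1), (i + 1) =>
      rw [TTl_succ s hs t n i j]
      push_cast
      calc
        (∑ x ∈ Finset.HasAntidiagonal.antidiagonal n, ∑ y ∈ Finset.HasAntidiagonal.antidiagonal j, ∑ z ∈ Finset.HasAntidiagonal.antidiagonal i,
            (Pl s x.1 y.1 z.1 : ℤ) * (TTl s t x.2 z.2 y.2 : ℤ))
            = ∑ x ∈ Finset.HasAntidiagonal.antidiagonal n, ∑ y ∈ Finset.HasAntidiagonal.antidiagonal j,
                ∑ z ∈ Finset.HasAntidiagonal.antidiagonal i,
                (if t ≤ x.2 then (if t ≤ z.2 then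
                  MvPowerSeries.coeff (mu x.1 y.1 z.1) A *
                  MvPowerSeries.coeff (mu (x.2 - t) y.2 (z.2 - t)) (A ^ (t + 1)) else 0)
                  else 0) := by
          apply Finset.sum_congr rfl
          intro x _
          apply Finset.sum_congr rfl
          intro y _
          apply Finset.sum_congr rfl
          intro z _
          rw [← hA, ih x.2 z.2 y.2]
          by_cases h1 : t ≤ x.2
          · by_cases h2 : t ≤ z.2
            · rw [if_pos (⟨h1, h2⟩ : t ≤ x.2 ∧ t ≤ z.2), if_pos h1, if_pos h2]
            · rw [if_neg (by tauto), if_pos h1, if_neg h2, mul_zero]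
          · rw [if_neg (by tauto), if_neg h1, mul_zero]
        _ = ∑ x ∈ Finset.HasAntidiagonal.antidiagonal n,
              (if t ≤ x.2 then (∑ y ∈ Finset.HasAntidiagonal.antidiagonal j, ∑ z ∈ Finset.HasAntidiagonal.antidiagonal i,
                (if t ≤ z.2 then
                  MvPowerSeries.coeff (mu x.1 y.1 z.1) A *
                  MvPowerSeries.coeff (mu (x.2 - t) y.2 (z.2 - t)) (A ^ (t + 1)) else 0))
                else 0) := by
          apply Finset.sum_congr rfl
          intro x _
          rw [← ite_sum]
          apply Finset.sum_congr rfl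
          intro y _
          rw [← ite_sum]
        _ = ∑ x ∈ Finset.HasAntidiagonal.antidiagonal n,
              (if t ≤ x.2 then (if t ≤ i then
                ∑ z ∈ Finset.HasAntidiagonal.antidiagonal (i - t), ∑ y ∈ Finset.HasAntidiagonal.antidiagonal j,
                  MvPowerSeries.coeff (mu x.1 y.1 z.1) A *
                  MvPowerSeries.coeff (mu (x.2 - t) y.2 z.2) (A ^ (t + 1)) else 0)
                else 0) := by
          apply Finset.sum_congr rfl
          intro x _
          by_cases h1 : t ≤ x.2
          · rw [if_pos h1, if_pos h1, Finset.sum_comm]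
            calc
              (∑ z ∈ Finset.HasAntidiagonal.antidiagonal i, ∑ y ∈ Finset.HasAntidiagonal.antidiagonal j,
                (if t ≤ z.2 then
                  MvPowerSeries.coeff (mu x.1 y.1 z.1) A *
                  MvPowerSeries.coeff (mu (x.2 - t) y.2 (z.2 - t)) (A ^ (t + 1)) else 0))
                  = ∑ z ∈ Finset.HasAntidiagonal.antidiagonal i,
                    (if t ≤ z.2 then (∑ y ∈ Finset.HasAntidiagonal.antidiagonal j,
                      MvPowerSeries.coeff (mu x.1 y.1 z.1) A *
                      MvPowerSeries.coeff (mu (x.2 - t) y.2 (z.2 - t)) (A ^ (t + 1))) else 0) := by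
                apply Finset.sum_congr rfl
                intro z _
                rw [← ite_sum]
              _ = if t ≤ i then
                    ∑ z ∈ Finset.HasAntidiagonal.antidiagonal (i - t), ∑ y ∈ Finset.HasAntidiagonal.antidiagonal j,
                      MvPowerSeries.coeff (mu x.1 y.1 z.1) A *
                      MvPowerSeries.coeff (mu (x.2 - t) y.2 z.2) (A ^ (t + 1)) else 0 :=
                sum_anti_shift t i (fun a b => ∑ y ∈ Finset.HasAntidiagonal.antidiagonal j,
                  MvPowerSeries.coeff (mu x.1 y.1 a) A *
                  MvPowerSeries.coeff (mu (x.2 - t) y.2 b) (A ^ (t + 1)))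
          · rw [if_neg h1, if_neg h1]
        _ = if t ≤ n then
              (∑ x ∈ Finset.HasAntidiagonal.antidiagonal (n - t),
                (if t ≤ i then
                  ∑ z ∈ Finset.HasAntidiagonal.antidiagonal (i - t), ∑ y ∈ Finset.HasAntidiagonal.antidiagonal j,
                    MvPowerSeries.coeff (mu x.1 y.1 z.1) A *
                    MvPowerSeries.coeff (mu x.2 y.2 z.2) (A ^ (t + 1)) else 0)) else 0 :=
          sum_anti_shift t n (fun a b =>
            if t ≤ i then
              ∑ z ∈ Finset.HasAntidiagonal.antidiagonal (i - t), ∑ y ∈ Finset.HasAntidiagonal.antidiagonal j,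
                MvPowerSeries.coeff (mu a y.1 z.1) A *
                MvPowerSeries.coeff (mu b y.2 z.2) (A ^ (t + 1)) else 0)
        _ = if t + 1 ≤ n + 1 ∧ t + 1 ≤ i + 1
            then MvPowerSeries.coeff (mu (n + 1 - (t + 1)) j (i + 1 - (t + 1))) (A ^ (t + 2))
            else 0 := by
          rw [ite_sum]
          by_cases h1 : t ≤ n
          · by_cases h2 : t ≤ i
            · rw [if_pos h1, if_pos h2, if_pos (by omega : t + 1 ≤ n + 1 ∧ t + 1 ≤ i + 1)]
              rw [show n + 1 - (t + 1) = n - t from by omega,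
                show i + 1 - (t + 1) = i - t from by omega]
              rw [show (A : MvPowerSeries (Fin 3) ℤ) ^ (t + 2) = A * A ^ (t + 1) from by ring]
              rw [coeff_mul_mu]
              apply Finset.sum_congr rfl
              intro x _
              rw [Finset.sum_comm]
            · rw [if_pos h1, if_neg h2, if_neg (by omega)]
          · rw [if_neg h1, if_neg (by omega)]
        _ = if t ≤ n ∧ t ≤ i
            then MvPowerSeries.coeff (mu (n - t) j (i - t)) (A ^ (t + 1 + 1)) else 0 := by
          by_cases h : t ≤ n ∧ t ≤ i
          · rw [if_pos (by omega : t + 1 ≤ n + 1 ∧ t + 1 ≤ i + 1), if_pos h,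
              show n + 1 - (t + 1) = n - t from by omega,
              show i + 1 - (t + 1) = i - t from by omega]
          · rw [if_neg (by omega), if_neg h]

end Final

section Main
open Finset MvPowerSeries

lemma hmain_lemma (s : ℕ) (hs : 1 ≤ s) (A : MvPowerSeries (Fin 3) ℤ)
    (hA : ∀ n j i : ℕ, MvPowerSeries.coeff (mu n j i) A = (Pl s n j i : ℤ)) :
    ∀ n j i : ℕ, MvPowerSeries.coeff (mu n j i) A
      = MvPowerSeries.coeff (mu n j i)
          (1 + MvPowerSeries.X 0 * MvPowerSeries.X 2 * A
            + MvPowerSeries.X 0 * A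
              * (1 + MvPowerSeries.X 0 * MvPowerSeries.X 1 * MvPowerSeries.X 2 * A) ^ s) := by
  have hTT := TTl_coeff s hs A hA
  intro n j i
  rw [map_add, map_add, coeff_one_mu]
  have ht2 : MvPowerSeries.coeff (mu n j i) (MvPowerSeries.X 0 * MvPowerSeries.X 2 * A)
      = if 1 ≤ n ∧ 1 ≤ i then (Pl s (n - 1) j (i - 1) : ℤ) else 0 := by
    rw [mul_assoc, coeff_X0_mul]
    by_cases hn : 1 ≤ n
    · rw [if_pos hn, coeff_X2_mul]
      by_cases hi : 1 ≤ i
      · rw [if_pos hi, if_pos ⟨hn, hi⟩, hA]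
      · rw [if_neg hi, if_neg (by tauto)]
    · rw [if_neg hn, if_neg (by tauto)]
  have hexp : (1 + MvPowerSeries.X 0 * MvPowerSeries.X 1 * MvPowerSeries.X 2 * A) ^ s
      = ∑ t ∈ Finset.range (s + 1),
          (MvPowerSeries.X 0 * MvPowerSeries.X 1 * MvPowerSeries.X 2 * A) ^ t *
            ((s.choose t : ℕ) : MvPowerSeries (Fin 3) ℤ) := by
    rw [add_comm (1 : MvPowerSeries (Fin 3) ℤ), add_pow]
    apply Finset.sum_congr rfl
    intro t _
    rw [one_pow, mul_one]
  have ht3 : MvPowerSeries.coeff (mu n j i)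
      (MvPowerSeries.X 0 * A
        * (1 + MvPowerSeries.X 0 * MvPowerSeries.X 1 * MvPowerSeries.X 2 * A) ^ s)
      = ∑ t ∈ Finset.range (s + 1), (s.choose t : ℤ) *
          (if 1 ≤ n ∧ t ≤ n - 1 ∧ t ≤ j ∧ t ≤ i
            then MvPowerSeries.coeff (mu (n - 1 - t) (j - t) (i - t)) (A ^ (t + 1)) else 0) := by
    rw [hexp, Finset.mul_sum, map_sum]
    apply Finset.sum_congr rfl
    intro t _
    have hre : MvPowerSeries.X 0 * A *
        ((MvPowerSeries.X 0 * MvPowerSeries.X 1 * MvPowerSeries.X 2 * A) ^ t *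
          ((s.choose t : ℕ) : MvPowerSeries (Fin 3) ℤ))
        = (s.choose t : ℕ) •
            (MvPowerSeries.X 0 *
              (A * (MvPowerSeries.X 0 * MvPowerSeries.X 1 * MvPowerSeries.X 2 * A) ^ t)) := by
      rw [nsmul_eq_mul]
      ring
    rw [hre, map_nsmul, nsmul_eq_mul]
    congr 1
    rw [coeff_X0_mul]
    by_cases hn : 1 ≤ n
    · rw [if_pos hn, coeff_phi_Wpow A t A (n - 1) j i]
      by_cases hc : t ≤ n - 1 ∧ t ≤ j ∧ t ≤ i
      · rw [if_pos hc, if_pos ⟨hn, hc.1, hc.2.1, hc.2.2⟩,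
          show A * A ^ t = A ^ (t + 1) from by ring]
      · rw [if_neg hc, if_neg (by tauto)]
    · rw [if_neg hn, if_neg (by tauto)]
  rw [ht2, ht3, hA]
  cases n with
  | zero =>
    rw [Pl_zero]
    rw [if_neg (by omega : ¬(1 ≤ 0 ∧ 1 ≤ i))]
    rw [Finset.sum_eq_zero (fun t _ => by rw [if_neg (by omega), mul_zero])]
    by_cases hj : j = 0 <;> by_cases hi : i = 0 <;> simp [hj, hi]
  | succ n' =>
    rw [P_succ s n' j i, if_neg (by omega : ¬(n' + 1 = 0 ∧ j = 0 ∧ i = 0)), zero_add]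
    push_cast
    congr 1
    · by_cases hi : 1 ≤ i <;> simp [hi]
    · apply Finset.sum_congr rfl
      intro t _
      push_cast
      rw [hTT t n' i (j - t)]
      by_cases htj : t ≤ j <;> by_cases htn : t ≤ n' <;> by_cases hti : t ≤ i <;>
        simp [htj, htn, hti]

end Main

end Stmt6

theorem stmt6 (s : ℕ) (hs : 1 ≤ s) (A : MvPowerSeries (Fin 3) ℤ)
    (hA : ∀ n j i : ℕ,
      MvPowerSeries.coeff
          (Finsupp.single 0 n + Finsupp.single 1 j + Finsupp.single 2 i) A
        = (pairCountAS s n j i : ℤ)) :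
    A = 1 + MvPowerSeries.X 0 * MvPowerSeries.X 2 * A
        + MvPowerSeries.X 0 * A
            * (1 + MvPowerSeries.X 0 * MvPowerSeries.X 1 * MvPowerSeries.X 2 * A) ^ s := by
  have hA' : ∀ n j i : ℕ, MvPowerSeries.coeff (Stmt6.mu n j i) A = (Stmt6.Pl s n j i : ℤ) := by
    intro n j i
    refine (hA n j i).trans ?_
    rw [Stmt6.pairCount_eq_Pl]
  have hmain := Stmt6.hmain_lemma s hs A hA'
  apply MvPowerSeries.ext
  intro m
  have := hmain (m 0) (m 1) (m 2)
  rwa [← Stmt6.fin3_eq m] at this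
end

section
/- For all natural numbers n, i, j with j ≤ i ≤ n−j, the binomial-coefficient identity (j+1) · C(n+1, j+1) · C(n−j, n−i) · C(n−i, j) = (n+1) · C(2j, j) · C(n, i+j) · C(i+j, 2j) holds, where C denotes the binomial coefficient. (Equivalently, (1/(n+1))·C(n+1,j+1)·C(n−j,n−i)·C(n−i,j) = c_j·C(n,i+j)·C(i+j,2j), where c_j = C(2j,j)/(j+1) is the j-th Catalan number.) -/
theorem stmt9 (n i j : ℕ) (hji : j ≤ i) (hin : i ≤ n - j) :
    (j + 1) * Nat.choose (n + 1) (j + 1) * Nat.choose (n - j) (n - i) * Nat.choose (n - i) j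
      = (n + 1) * Nat.choose (2 * j) j * Nat.choose n (i + j)
          * Nat.choose (i + j) (2 * j) := by
  have hj : j ≤ n := le_trans hji (le_trans hin (Nat.sub_le n j))
  have hijn : i + j ≤ n := by omega
  have h1 : (j + 1) * Nat.choose (n + 1) (j + 1) = (n + 1) * Nat.choose n j := by
    rw [mul_comm ((j : ℕ) + 1)]
    exact (Nat.add_one_mul_choose_eq n j).symm
  have h2 : Nat.choose (n - j) (n - i) * Nat.choose (n - i) j
      = Nat.choose (n - j) j * Nat.choose (n - j - j) (n - i - j) :=
    Nat.choose_mul (by omega)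
  have h3 : Nat.choose n (i + j) * Nat.choose (i + j) (2 * j)
      = Nat.choose n (2 * j) * Nat.choose (n - 2 * j) (i + j - 2 * j) :=
    Nat.choose_mul (by omega)
  have h4 : Nat.choose n (2 * j) * Nat.choose (2 * j) j
      = Nat.choose n j * Nat.choose (n - j) (2 * j - j) :=
    Nat.choose_mul (by omega)
  have h5 : Nat.choose (n - j - j) (n - i - j) = Nat.choose (n - 2 * j) (i + j - 2 * j) := by
    have e1 : n - j - j = n - 2 * j := by omega
    have e2 : n - 2 * j - (i + j - 2 * j) = n - i - j := by omega
    rw [e1, ← Nat.choose_symm (by omega : i + j - 2 * j ≤ n - 2 * j), e2]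
  have e3 : 2 * j - j = j := by omega
  calc (j + 1) * Nat.choose (n + 1) (j + 1) * Nat.choose (n - j) (n - i) * Nat.choose (n - i) j
      = (j + 1) * Nat.choose (n + 1) (j + 1)
          * (Nat.choose (n - j) (n - i) * Nat.choose (n - i) j) := by ring
    _ = (n + 1) * Nat.choose n j
          * (Nat.choose (n - j) j * Nat.choose (n - j - j) (n - i - j)) := by rw [h1, h2]
    _ = (n + 1) * (Nat.choose n j * Nat.choose (n - j) (2 * j - j))
          * Nat.choose (n - 2 * j) (i + j - 2 * j) := by rw [h5, e3]; ring
    _ = (n + 1) * (Nat.choose n (2 * j) * Nat.choose (2 * j) j)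
          * Nat.choose (n - 2 * j) (i + j - 2 * j) := by rw [h4]
    _ = (n + 1) * Nat.choose (2 * j) j
          * (Nat.choose n (2 * j) * Nat.choose (n - 2 * j) (i + j - 2 * j)) := by ring
    _ = (n + 1) * Nat.choose (2 * j) j * Nat.choose n (i + j)
          * Nat.choose (i + j) (2 * j) := by rw [← h3]; ring
end

section
/- For all integers n ≥ 0 and 0 ≤ j ≤ n, the number of noncrossing contractions with exactly j edges of the word (a a†)^n satisfies (n+1) · #{noncrossing contractions of (a a†)^n with j edges} = C(n+1, j+1) · C(n+1, j); that is, this number is the Narayana number (1/(n+1))·C(n+1, j+1)·C(n+1, j), where C denotes the binomial coefficient. -/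
/-- The word `(a^r a†)^n`, of length `(r+1)n`: `n` blocks, each consisting of `r` copies of `a`
(`false`) followed by one `a†` (`true`). -/
def wordRA (r n : ℕ) : Fin ((r + 1) * n) → Bool := fun i => decide (i.val % (r + 1) = r)


open Finset
open scoped Classical

set_option linter.unusedTactic false
set_option linter.unreachableTactic false

private lemma fst_injOn {N : ℕ} {w : Fin N → Bool} {E : Finset (Fin N × Fin N)}
    (hc : IsContraction w E) : ∀ e ∈ E, ∀ f ∈ E, e.1 = f.1 → e = f := by
  intro e he f hf h
  by_contra hne
  exact (hc.2 e he f hf hne).1 h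

private lemma snd_injOn {N : ℕ} {w : Fin N → Bool} {E : Finset (Fin N × Fin N)}
    (hc : IsContraction w E) : ∀ e ∈ E, ∀ f ∈ E, e.2 = f.2 → e = f := by
  intro e he f hf h
  by_contra hne
  exact (hc.2 e he f hf hne).2.2.2 h

/-- the partner of the minimal `a†` is the maximal matched `a` before it -/
private lemma forced {N : ℕ} {w : Fin N → Bool} {E : Finset (Fin N × Fin N)}
    (hc : IsContraction w E) (hnc : IsNoncrossing E) {e f : Fin N × Fin N}
    (he : e ∈ E) (hf : f ∈ E) (hq : ∀ g ∈ E, e.2 ≤ g.2) (hlt : f.1 < e.2) : f.1 ≤ e.1 := by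
  by_contra hgt
  push_neg at hgt
  have hne : e ≠ f := fun h => absurd (congrArg Prod.fst h) (Fin.ne_of_lt hgt)
  have h2 : e.2 < f.2 := lt_of_le_of_ne (hq f hf) ((hc.2 e he f hf hne).2.2.2)
  exact hnc e he f hf (Or.inl ⟨hgt, hlt, h2⟩)

private lemma image_erase_injOn {α β : Type*} [DecidableEq α] [DecidableEq β]
    {E : Finset α} {f : α → β} (hf : ∀ x ∈ E, ∀ y ∈ E, f x = f y → x = y)
    {a : α} (ha : a ∈ E) : (E.erase a).image f = (E.image f).erase (f a) := by
  ext b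
  simp only [mem_image, mem_erase]
  constructor
  · rintro ⟨x, ⟨hxa, hxE⟩, rfl⟩
    exact ⟨fun h => hxa (hf x hxE a ha h), x, hxE, rfl⟩
  · rintro ⟨hb, x, hxE, rfl⟩
    exact ⟨x, ⟨fun h => hb (by rw [h]), hxE⟩, rfl⟩

private lemma nc_unique {N : ℕ} {w : Fin N → Bool} :
    ∀ (m : ℕ) (E E' : Finset (Fin N × Fin N)), E.card = m →
      IsContraction w E → IsNoncrossing E → IsContraction w E' → IsNoncrossing E' →
      E.image Prod.fst = E'.image Prod.fst → E.image Prod.snd = E'.image Prod.snd →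
      E = E' := by
  intro m
  induction m with
  | zero =>
    intro E E' hcard _ _ _ _ _ h2
    have hE : E = ∅ := card_eq_zero.mp hcard
    subst hE
    have : E'.image Prod.snd = ∅ := by rw [← h2, image_empty]
    exact (image_eq_empty.mp this).symm
  | succ m ih =>
    intro E E' hcard hc hnc hc' hnc' h1 h2
    have hne : E.Nonempty := card_pos.mp (by omega)
    have hne2 : (E.image Prod.snd).Nonempty := hne.image _
    set q := (E.image Prod.snd).min' hne2 with hqdef
    have hqmem : q ∈ E.image Prod.snd := min'_mem _ _
    obtain ⟨e, heE, heq⟩ := mem_image.mp hqmem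
    obtain ⟨e', heE', heq'⟩ := mem_image.mp (by rw [← h2]; exact hqmem)
    have hqmin : ∀ g ∈ E, e.2 ≤ g.2 := fun g hg => by
      rw [heq]; exact min'_le _ _ (mem_image_of_mem _ hg)
    have hqmin' : ∀ g ∈ E', e'.2 ≤ g.2 := fun g hg => by
      rw [heq']
      have hg2 : g.2 ∈ E.image Prod.snd := by rw [h2]; exact mem_image_of_mem _ hg
      exact min'_le _ _ hg2
    -- e.1 = e'.1
    have hee' : e = e' := by
      have hle : e.1 ≤ e'.1 := by
        obtain ⟨f', hf'E, hf'⟩ := mem_image.mp (h1 ▸ mem_image_of_mem Prod.fst heE)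
        have : f'.1 < e'.2 := by
          rw [hf', heq']
          rw [← heq]
          exact (hc.1 e heE).1
        have := forced hc' hnc' heE' hf'E hqmin' this
        omega
      have hge : e'.1 ≤ e.1 := by
        obtain ⟨f, hfE, hf⟩ := mem_image.mp (h1.symm ▸ mem_image_of_mem Prod.fst heE')
        have : f.1 < e.2 := by
          rw [hf, heq]
          rw [← heq']
          exact (hc'.1 e' heE').1
        have := forced hc hnc heE hfE hqmin this
        omega
      have : e.2 = e'.2 := by rw [heq, heq']
      exact Prod.ext (le_antisymm hle hge) this
    -- recurse
    have hsubE : ∀ (F : Finset (Fin N × Fin N)) (a), F.erase a ⊆ F := fun F a => erase_subset _ _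
    have hcE : IsContraction w (E.erase e) :=
      ⟨fun x hx => hc.1 x (hsubE E e hx),
       fun x hx y hy => hc.2 x (hsubE E e hx) y (hsubE E e hy)⟩
    have hcE' : IsContraction w (E'.erase e') :=
      ⟨fun x hx => hc'.1 x (hsubE E' e' hx),
       fun x hx y hy => hc'.2 x (hsubE E' e' hx) y (hsubE E' e' hy)⟩
    have hncE : IsNoncrossing (E.erase e) := fun x hx y hy => hnc x (hsubE E e hx) y (hsubE E e hy)
    have hncE' : IsNoncrossing (E'.erase e') :=
      fun x hx y hy => hnc' x (hsubE E' e' hx) y (hsubE E' e' hy)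
    have key := ih (E.erase e) (E'.erase e')
      (by rw [card_erase_of_mem heE]; omega)
      hcE hncE hcE' hncE'
      (by rw [image_erase_injOn (fst_injOn hc) heE, image_erase_injOn (fst_injOn hc') heE',
              h1, hee'])
      (by rw [image_erase_injOn (snd_injOn hc) heE, image_erase_injOn (snd_injOn hc') heE',
              h2, hee'])
    have : insert e (E.erase e) = insert e' (E'.erase e') := by rw [key, hee']
    rwa [insert_erase heE, insert_erase heE'] at this

private def pref (S : Finset ℕ) (k : ℕ) : ℕ := (S.filter (fun x => x ≤ k)).card

private def Dom (S T : Finset ℕ) : Prop := ∀ k, pref T k ≤ pref S k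

private lemma nc_exists (n : ℕ) : ∀ (j : ℕ) (S T : Finset ℕ), S.card = j → T.card = j →
    S ⊆ range n → T ⊆ range n → Dom S T →
    ∃ E : Finset (Fin ((1+1)*n) × Fin ((1+1)*n)),
      IsContraction (wordRA 1 n) E ∧ IsNoncrossing E ∧ E.card = j ∧
      E.image (fun e => e.1.val / 2) = S ∧ E.image (fun e => e.2.val / 2) = T := by
  intro j
  induction j with
  | zero =>
    intro S T hS hT _ _ _
    refine ⟨∅, ⟨by simp, by simp⟩, by simp [IsNoncrossing], by simp, ?_, ?_⟩ <;>
      simp [card_eq_zero.mp hS, card_eq_zero.mp hT]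
  | succ j ih =>
    intro S T hS hT hSsub hTsub hdom
    have hTne : T.Nonempty := card_pos.mp (by omega)
    set q := T.min' hTne with hqdef
    have hqT : q ∈ T := min'_mem _ _
    have hqmin : ∀ t ∈ T, q ≤ t := fun t ht => min'_le _ _ ht
    have hqn : q < n := mem_range.mp (hTsub hqT)
    have hAne : (S.filter (fun x => x ≤ q)).Nonempty := by
      have h1 : 0 < pref T q := by
        simp only [pref]
        exact card_pos.mpr ⟨q, mem_filter.mpr ⟨hqT, le_rfl⟩⟩
      have h2 := hdom q
      simp only [pref] at h1 h2
      exact card_pos.mp (lt_of_lt_of_le h1 h2)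
    set p := (S.filter (fun x => x ≤ q)).max' hAne with hpdef
    have hpmem := max'_mem (S.filter (fun x => x ≤ q)) hAne
    have hpS : p ∈ S := (mem_filter.mp hpmem).1
    have hpq : p ≤ q := (mem_filter.mp hpmem).2
    have hpmax : ∀ x ∈ S, x ≤ q → x ≤ p := fun x hx hxq =>
      le_max' (S.filter (fun y => y ≤ q)) x (mem_filter.mpr ⟨hx, hxq⟩)
    -- apply IH to the erased sets
    have hdom' : Dom (S.erase p) (T.erase q) := by
      intro k
      rcases Nat.lt_or_ge k q with hk | hk
      · have hempty : (T.erase q).filter (fun x => x ≤ k) = ∅ := by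
          rw [eq_empty_iff_forall_notMem]
          intro x hx
          simp only [mem_filter, mem_erase] at hx
          have := hqmin x hx.1.2
          omega
        unfold pref
        rw [hempty]
        simp
      · have hT1 : pref (T.erase q) k = pref T k - 1 := by
          simp only [pref, filter_erase]
          rw [card_erase_of_mem (show q ∈ T.filter (fun x => x ≤ k) from
            mem_filter.mpr ⟨hqT, hk⟩)]
        have hS1 : pref (S.erase p) k = pref S k - 1 := by
          simp only [pref, filter_erase]
          rw [card_erase_of_mem (show p ∈ S.filter (fun x => x ≤ k) from
            mem_filter.mpr ⟨hpS, le_trans hpq hk⟩)]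
        have h2 := hdom k
        have h1 : 0 < pref T k := by
          simp only [pref]
          exact card_pos.mpr ⟨q, mem_filter.mpr ⟨hqT, hk⟩⟩
        rw [hT1, hS1]
        omega
    obtain ⟨E', hc', hnc', hcard', hS', hT'⟩ := ih (S.erase p) (T.erase q)
      (by rw [card_erase_of_mem hpS]; omega)
      (by rw [card_erase_of_mem hqT]; omega)
      ((erase_subset _ _).trans hSsub)
      ((erase_subset _ _).trans hTsub)
      hdom'
    have h2p : 2*p < (1+1)*n := by omega
    have h2q : 2*q+1 < (1+1)*n := by omega
    set e₀ : Fin ((1+1)*n) × Fin ((1+1)*n) := (⟨2*p, h2p⟩, ⟨2*q+1, h2q⟩) with he₀def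
    -- facts about edges of E'
    have hfacts : ∀ f ∈ E', f.1.val % 2 = 0 ∧ f.2.val % 2 = 1 ∧
        (f.1.val < 2*p ∨ 2*q+1 < f.1.val) ∧ 2*q+1 < f.2.val := by
      intro f hf
      have hpar1 : f.1.val % 2 = 0 := by
        have := (hc'.1 f hf).2.1
        simp only [wordRA, decide_eq_false_iff_not] at this
        omega
      have hpar2 : f.2.val % 2 = 1 := by
        have := (hc'.1 f hf).2.2
        simp only [wordRA, decide_eq_true_eq] at this
        omega
      have hb1 : f.1.val / 2 ∈ S.erase p := by
        rw [← hS']; exact mem_image_of_mem _ hf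
      have hb2 : f.2.val / 2 ∈ T.erase q := by
        rw [← hT']; exact mem_image_of_mem _ hf
      simp only [mem_erase] at hb1 hb2
      have hq2 : q < f.2.val / 2 := lt_of_le_of_ne (hqmin _ hb2.2) (Ne.symm hb2.1)
      refine ⟨hpar1, hpar2, ?_, by omega⟩
      rcases le_or_gt (f.1.val / 2) q with h | h
      · have := hpmax _ hb1.2 h
        have : f.1.val / 2 < p := lt_of_le_of_ne this hb1.1
        omega
      · omega
    have he₀notmem : e₀ ∉ E' := by
      intro hmem
      have := (hfacts e₀ hmem).2.2.1
      simp only [he₀def] at this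
      omega
    refine ⟨insert e₀ E', ⟨?_, ?_⟩, ?_, ?_, ?_, ?_⟩
    · -- edge conditions
      intro e he
      rcases mem_insert.mp he with rfl | he
      · refine ⟨?_, ?_, ?_⟩
        · simp only [he₀def, Fin.mk_lt_mk]; omega
        · simp only [he₀def, wordRA, decide_eq_false_iff_not]; omega
        · simp only [he₀def, wordRA, decide_eq_true_eq]; omega
      · exact hc'.1 e he
    · -- distinctness
      intro e he f hf hne
      rcases mem_insert.mp he with rfl | he <;> rcases mem_insert.mp hf with rfl | hf
      · exact absurd rfl hne
      · obtain ⟨p1, p2, p3, p4⟩ := hfacts f hf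
        refine ⟨Fin.ne_of_val_ne ?_, Fin.ne_of_val_ne ?_, Fin.ne_of_val_ne ?_,
          Fin.ne_of_val_ne ?_⟩ <;> simp only [he₀def] <;> omega
      · obtain ⟨p1, p2, p3, p4⟩ := hfacts e he
        refine ⟨Fin.ne_of_val_ne ?_, Fin.ne_of_val_ne ?_, Fin.ne_of_val_ne ?_,
          Fin.ne_of_val_ne ?_⟩ <;> simp only [he₀def] <;> omega
      · exact hc'.2 e he f hf hne
    · -- noncrossing
      intro e he f hf
      rcases mem_insert.mp he with rfl | he <;> rcases mem_insert.mp hf with rfl | hf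
      · rintro (⟨h1, -, -⟩ | ⟨h1, -, -⟩) <;> exact absurd h1 (lt_irrefl _)
      · obtain ⟨p1, p2, p3, p4⟩ := hfacts f hf
        rintro (⟨h1, h2, h3⟩ | ⟨h1, h2, h3⟩) <;>
          simp only [he₀def, Fin.lt_def] at h1 h2 h3 <;> omega
      · obtain ⟨p1, p2, p3, p4⟩ := hfacts e he
        rintro (⟨h1, h2, h3⟩ | ⟨h1, h2, h3⟩) <;>
          simp only [he₀def, Fin.lt_def] at h1 h2 h3 <;> omega
      · exact hnc' e he f hf
    · rw [card_insert_of_notMem he₀notmem, hcard']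
    · rw [image_insert, hS']
      simp only [he₀def]
      rw [show (2*p)/2 = p by omega]
      exact insert_erase hpS
    · rw [image_insert, hT']
      simp only [he₀def]
      rw [show (2*q+1)/2 = q by omega]
      exact insert_erase hqT

private lemma stepA (n j : ℕ) :
    ncCount (wordRA 1 n) j
      = ((((range n).powersetCard j) ×ˢ ((range n).powersetCard j)).filter
          (fun p => Dom p.1 p.2)).card := by
  rw [ncCount, Nat.card_eq_fintype_card, Fintype.card_subtype]
  apply card_bij (fun E _ => (E.image (fun e => (e.1.val / 2 : ℕ)),
    E.image (fun e => (e.2.val / 2 : ℕ))))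
  · -- maps into target
    intro E hE
    simp only [mem_filter, mem_univ, true_and] at hE
    obtain ⟨hc, hnc, hcard⟩ := hE
    have hpar : ∀ e ∈ E, e.1.val % 2 = 0 ∧ e.2.val % 2 = 1 := by
      intro e he
      have h1 := (hc.1 e he).2.1
      have h2 := (hc.1 e he).2.2
      simp only [wordRA, decide_eq_false_iff_not, decide_eq_true_eq] at h1 h2
      omega
    have hinj1 : ∀ e ∈ E, ∀ f ∈ E, e.1.val / 2 = f.1.val / 2 → e = f := by
      intro e he f hf h
      have h1 := (hpar e he).1
      have h2 := (hpar f hf).1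
      exact fst_injOn hc e he f hf (Fin.ext (by omega))
    have hinj2 : ∀ e ∈ E, ∀ f ∈ E, e.2.val / 2 = f.2.val / 2 → e = f := by
      intro e he f hf h
      have h1 := (hpar e he).2
      have h2 := (hpar f hf).2
      exact snd_injOn hc e he f hf (Fin.ext (by omega))
    simp only [mem_filter, mem_product, mem_powersetCard]
    refine ⟨⟨⟨?_, ?_⟩, ?_, ?_⟩, ?_⟩
    · intro x hx
      obtain ⟨e, he, rfl⟩ := mem_image.mp hx
      have := e.1.isLt
      rw [mem_range]
      omega
    · rw [card_image_of_injOn (fun e he f hf => hinj1 e he f hf), hcard]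
    · intro x hx
      obtain ⟨e, he, rfl⟩ := mem_image.mp hx
      have := e.2.isLt
      rw [mem_range]
      omega
    · rw [card_image_of_injOn (fun e he f hf => hinj2 e he f hf), hcard]
    · -- dominance
      intro k
      simp only [pref, filter_image]
      rw [card_image_of_injOn (fun e he f hf h =>
          hinj2 e (mem_of_mem_filter e he) f (mem_of_mem_filter f hf) h),
        card_image_of_injOn (fun e he f hf h =>
          hinj1 e (mem_of_mem_filter e he) f (mem_of_mem_filter f hf) h)]
      apply card_le_card
      intro e he
      simp only [mem_filter] at he ⊢
      obtain ⟨he, hle⟩ := he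
      have h1 := (hpar e he).1
      have h2 := (hpar e he).2
      have h3 : e.1 < e.2 := (hc.1 e he).1
      rw [Fin.lt_def] at h3
      exact ⟨he, by omega⟩
  · -- injectivity
    intro E hE E' hE' heq
    simp only [mem_filter, mem_univ, true_and] at hE hE'
    obtain ⟨hc, hnc, hcard⟩ := hE
    obtain ⟨hc', hnc', hcard'⟩ := hE'
    have h1 := congrArg Prod.fst heq
    have h2 := congrArg Prod.snd heq
    simp only at h1 h2
    have hpar : ∀ (F : Finset (Fin ((1+1)*n) × Fin ((1+1)*n))), IsContraction (wordRA 1 n) F →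
        ∀ e ∈ F, e.1.val % 2 = 0 ∧ e.2.val % 2 = 1 := by
      intro F hcF e he
      have ha := (hcF.1 e he).2.1
      have hb := (hcF.1 e he).2.2
      simp only [wordRA, decide_eq_false_iff_not, decide_eq_true_eq] at ha hb
      omega
    -- translate block image equality to position image equality
    have key1 : E.image Prod.fst = E'.image Prod.fst := by
      have hsub : ∀ (F F' : Finset (Fin ((1+1)*n) × Fin ((1+1)*n))),
          IsContraction (wordRA 1 n) F → IsContraction (wordRA 1 n) F' →
          F.image (fun e => (e.1.val / 2 : ℕ)) = F'.image (fun e => (e.1.val / 2 : ℕ)) →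
          F.image Prod.fst ⊆ F'.image Prod.fst := by
        intro F F' hcF hcF' him x hx
        obtain ⟨e, he, rfl⟩ := mem_image.mp hx
        have : (e.1.val / 2 : ℕ) ∈ F'.image (fun e => (e.1.val / 2 : ℕ)) := by
          rw [← him]; exact mem_image_of_mem _ he
        obtain ⟨f, hf, hfe⟩ := mem_image.mp this
        have hp1 := (hpar F hcF e he).1
        have hp2 := (hpar F' hcF' f hf).1
        have : f.1 = e.1 := Fin.ext (by omega)
        rw [← this]
        exact mem_image_of_mem _ hf
      exact Subset.antisymm (hsub E E' hc hc' h1) (hsub E' E hc' hc h1.symm)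
    have key2 : E.image Prod.snd = E'.image Prod.snd := by
      have hsub : ∀ (F F' : Finset (Fin ((1+1)*n) × Fin ((1+1)*n))),
          IsContraction (wordRA 1 n) F → IsContraction (wordRA 1 n) F' →
          F.image (fun e => (e.2.val / 2 : ℕ)) = F'.image (fun e => (e.2.val / 2 : ℕ)) →
          F.image Prod.snd ⊆ F'.image Prod.snd := by
        intro F F' hcF hcF' him x hx
        obtain ⟨e, he, rfl⟩ := mem_image.mp hx
        have : (e.2.val / 2 : ℕ) ∈ F'.image (fun e => (e.2.val / 2 : ℕ)) := by
          rw [← him]; exact mem_image_of_mem _ he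
        obtain ⟨f, hf, hfe⟩ := mem_image.mp this
        have hp1 := (hpar F hcF e he).2
        have hp2 := (hpar F' hcF' f hf).2
        have : f.2 = e.2 := Fin.ext (by omega)
        rw [← this]
        exact mem_image_of_mem _ hf
      exact Subset.antisymm (hsub E E' hc hc' h2) (hsub E' E hc' hc h2.symm)
    exact nc_unique E.card E E' rfl hc hnc hc' hnc' key1 key2
  · -- surjectivity
    rintro ⟨S, T⟩ hST
    simp only [mem_filter, mem_product, mem_powersetCard] at hST
    obtain ⟨⟨⟨hS1, hS2⟩, hT1, hT2⟩, hdom⟩ := hST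
    obtain ⟨E, hc, hnc, hcard, hSim, hTim⟩ := nc_exists n j S T hS2 hT2 hS1 hT1 hdom
    exact ⟨E, by simp only [mem_filter, mem_univ, true_and]; exact ⟨hc, hnc, hcard⟩,
      by rw [hSim, hTim]⟩

private lemma pref_mono (S : Finset ℕ) {k l : ℕ} (h : k ≤ l) : pref S k ≤ pref S l :=
  card_le_card (fun x hx => by
    simp only [mem_filter] at *; exact ⟨hx.1, hx.2.trans h⟩)

private lemma pref_succ_le (S : Finset ℕ) (k : ℕ) : pref S (k+1) ≤ pref S k + 1 := by
  have h : S.filter (fun x => x ≤ k + 1) ⊆ insert (k+1) (S.filter (fun x => x ≤ k)) := by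
    intro x hx
    simp only [mem_filter, mem_insert] at *
    rcases hx with ⟨h1, h2⟩
    rcases Nat.lt_or_ge x (k+1) with h3 | h3
    · exact Or.inr ⟨h1, by omega⟩
    · exact Or.inl (by omega)
  calc pref S (k+1) ≤ _ := card_le_card h
    _ ≤ pref S k + 1 := card_insert_le _ _

private lemma pref_zero_le (S : Finset ℕ) : pref S 0 ≤ 1 := by
  have h : S.filter (fun x => x ≤ 0) ⊆ {0} := by
    intro x hx; simp only [mem_filter, mem_singleton] at *; omega
  have := card_le_card h
  simpa [pref] using this

private lemma pref_eq_card {S : Finset ℕ} {n k : ℕ} (hS : S ⊆ range n) (hk : n ≤ k + 1) :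
    pref S k = S.card := by
  unfold pref
  congr 1
  apply filter_true_of_mem
  intro x hx
  have := hS hx
  simp only [mem_range] at this
  omega

/-- at a minimal violation, T's prefix count exceeds S's by exactly one. -/
private lemma min_violation {S T : Finset ℕ} (h : ∃ k, pref S k < pref T k) :
    pref T (Nat.find h) = pref S (Nat.find h) + 1 := by
  have hs : pref S (Nat.find h) < pref T (Nat.find h) := Nat.find_spec h
  cases hm : Nat.find h with
  | zero =>
    rw [hm] at hs
    have := pref_zero_le T
    omega
  | succ k =>
    have hk : ¬ (pref S k < pref T k) := Nat.find_min h (by omega)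
    rw [hm] at hs
    have h1 := pref_succ_le T k
    have h2 := pref_mono S (show k ≤ k + 1 by omega)
    omega

private def swapAt (S T : Finset ℕ) (m : ℕ) : Finset ℕ × Finset ℕ :=
  (S.filter (fun x => x ≤ m) ∪ T.filter (fun x => ¬ x ≤ m),
   T.filter (fun x => x ≤ m) ∪ S.filter (fun x => ¬ x ≤ m))

private lemma swapAt_fst_card (S T : Finset ℕ) (m : ℕ) :
    (swapAt S T m).1.card = pref S m + (T.card - pref T m) := by
  unfold swapAt pref
  rw [card_union_of_disjoint]
  · congr 1
    have := card_filter_add_card_filter_not (s := T) (p := fun x => x ≤ m)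
    omega
  · rw [disjoint_left]
    intro x hx hy
    simp only [mem_filter] at hx hy
    exact hy.2 hx.2

private lemma swapAt_snd_card (S T : Finset ℕ) (m : ℕ) :
    (swapAt S T m).2.card = pref T m + (S.card - pref S m) := by
  unfold swapAt pref
  rw [card_union_of_disjoint]
  · congr 1
    have := card_filter_add_card_filter_not (s := S) (p := fun x => x ≤ m)
    omega
  · rw [disjoint_left]
    intro x hx hy
    simp only [mem_filter] at hx hy
    exact hy.2 hx.2

private lemma pref_union (A B : Finset ℕ) (hd : Disjoint A B) (k : ℕ) :
    pref (A ∪ B) k = pref A k + pref B k := by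
  unfold pref
  rw [filter_union, card_union_of_disjoint (disjoint_filter_filter hd)]

private lemma swapAt_pref_fst (S T : Finset ℕ) {m k : ℕ} (hk : k ≤ m) :
    pref (swapAt S T m).1 k = pref S k := by
  unfold swapAt pref
  congr 1
  ext x
  simp only [mem_filter, mem_union]
  constructor
  · rintro ⟨h1 | h1, h2⟩
    · exact ⟨h1.1, h2⟩
    · exact absurd (h2.trans hk) h1.2
  · rintro ⟨h1, h2⟩
    exact ⟨Or.inl ⟨h1, h2.trans hk⟩, h2⟩

private lemma swapAt_pref_snd (S T : Finset ℕ) {m k : ℕ} (hk : k ≤ m) :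
    pref (swapAt S T m).2 k = pref T k := by
  unfold swapAt pref
  congr 1
  ext x
  simp only [mem_filter, mem_union]
  constructor
  · rintro ⟨h1 | h1, h2⟩
    · exact ⟨h1.1, h2⟩
    · exact absurd (h2.trans hk) h1.2
  · rintro ⟨h1, h2⟩
    exact ⟨Or.inl ⟨h1, h2.trans hk⟩, h2⟩

private lemma swapAt_swapAt (S T : Finset ℕ) (m : ℕ) :
    swapAt (swapAt S T m).1 (swapAt S T m).2 m = (S, T) := by
  unfold swapAt
  ext x <;> simp only [mem_union, mem_filter, Prod.fst, Prod.snd] <;> constructor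
  · rintro (⟨(⟨h1,h2⟩|⟨h1,h2⟩), h3⟩ | ⟨(⟨h1,h2⟩|⟨h1,h2⟩), h3⟩) <;> first | exact h1 | exact absurd h2 h3 | (exfalso; exact h2 h3) | (exfalso; exact h3 h2)
  · intro hx
    rcases Classical.em (x ≤ m) with h | h
    · exact Or.inl ⟨Or.inl ⟨hx, h⟩, h⟩
    · exact Or.inr ⟨Or.inr ⟨hx, h⟩, h⟩
  · rintro (⟨(⟨h1,h2⟩|⟨h1,h2⟩), h3⟩ | ⟨(⟨h1,h2⟩|⟨h1,h2⟩), h3⟩) <;> first | exact h1 | exact absurd h2 h3 | (exfalso; exact h2 h3) | (exfalso; exact h3 h2)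
  · intro hx
    rcases Classical.em (x ≤ m) with h | h
    · exact Or.inl ⟨Or.inl ⟨hx, h⟩, h⟩
    · exact Or.inr ⟨Or.inr ⟨hx, h⟩, h⟩

private lemma swapAt_subset {S T : Finset ℕ} {n : ℕ} (hS : S ⊆ range n) (hT : T ⊆ range n)
    (m : ℕ) : (swapAt S T m).1 ⊆ range n ∧ (swapAt S T m).2 ⊆ range n := by
  constructor <;> intro x hx <;> simp only [swapAt, mem_union, mem_filter] at hx <;>
    rcases hx with ⟨h, _⟩ | ⟨h, _⟩ <;> first | exact hS h | exact hT h

private noncomputable def reflPair (p : Finset ℕ × Finset ℕ) : Finset ℕ × Finset ℕ :=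
  if h : ∃ k, pref p.1 k < pref p.2 k then swapAt p.1 p.2 (Nat.find h) else p

private lemma reflPair_eq {S T : Finset ℕ} (h : ∃ k, pref S k < pref T k) :
    reflPair (S, T) = swapAt S T (Nat.find h) := by
  unfold reflPair
  rw [dif_pos h]

private lemma reflPair_cards {S T : Finset ℕ} (h : ∃ k, pref S k < pref T k) :
    (reflPair (S, T)).1.card = T.card - 1 ∧ (reflPair (S, T)).2.card = S.card + 1 := by
  rw [reflPair_eq h]
  have hv := min_violation h
  have h1 : pref T (Nat.find h) ≤ T.card := by
    unfold pref; exact card_le_card (filter_subset _ _)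
  have h2 : pref S (Nat.find h) ≤ S.card := by
    unfold pref; exact card_le_card (filter_subset _ _)
  rw [swapAt_fst_card, swapAt_snd_card]
  omega

/-- the swapped pair still has a violation, with the same minimal point. -/
private lemma reflPair_violation {S T : Finset ℕ} (h : ∃ k, pref S k < pref T k) :
    ∃ h' : (∃ k, pref (reflPair (S, T)).1 k < pref (reflPair (S, T)).2 k),
      Nat.find h' = Nat.find h := by
  rw [reflPair_eq h]
  set m := Nat.find h with hm
  have h' : ∃ k, pref (swapAt S T m).1 k < pref (swapAt S T m).2 k := by
    refine ⟨m, ?_⟩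
    rw [swapAt_pref_fst S T le_rfl, swapAt_pref_snd S T le_rfl]
    exact Nat.find_spec h
  refine ⟨h', ?_⟩
  rw [Nat.find_eq_iff]
  constructor
  · rw [swapAt_pref_fst S T le_rfl, swapAt_pref_snd S T le_rfl]
    exact Nat.find_spec h
  · intro k hk
    rw [swapAt_pref_fst S T (le_of_lt hk), swapAt_pref_snd S T (le_of_lt hk)]
    exact Nat.find_min h hk

private lemma reflPair_involution {S T : Finset ℕ} (h : ∃ k, pref S k < pref T k) :
    reflPair (reflPair (S, T)) = (S, T) := by
  obtain ⟨h', hfind⟩ := reflPair_violation h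
  have h2 : reflPair (reflPair (S, T)) =
      swapAt (reflPair (S, T)).1 (reflPair (S, T)).2 (Nat.find h') := by
    unfold reflPair
    rw [dif_pos]
    exact h'
  rw [h2, hfind, reflPair_eq h]
  exact swapAt_swapAt S T (Nat.find h)

private lemma not_dom_iff {S T : Finset ℕ} : ¬ Dom S T ↔ ∃ k, pref S k < pref T k := by
  unfold Dom
  push_neg
  rfl

/-- Step B: the count of dominant pairs plus the reflection term. -/
private lemma stepB (n j : ℕ) (hj : 1 ≤ j) :
    ((((range n).powersetCard j) ×ˢ ((range n).powersetCard j)).filter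
        (fun p => Dom p.1 p.2)).card + n.choose (j-1) * n.choose (j+1)
      = n.choose j * n.choose j := by
  have htot : (((range n).powersetCard j) ×ˢ ((range n).powersetCard j)).card
      = n.choose j * n.choose j := by
    rw [card_product, card_powersetCard, card_range]
  have hsplit := card_filter_add_card_filter_not
    (s := ((range n).powersetCard j) ×ˢ ((range n).powersetCard j))
    (p := fun p => Dom p.1 p.2)
  have hbad : ((((range n).powersetCard j) ×ˢ ((range n).powersetCard j)).filter
      (fun p => ¬ Dom p.1 p.2)).card
      = ((((range n).powersetCard (j-1)) ×ˢ ((range n).powersetCard (j+1)))).card := by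
    apply card_nbij' reflPair reflPair
    · rintro ⟨S, T⟩ hp
      simp only [mem_coe, mem_filter, mem_product, mem_powersetCard] at hp
      obtain ⟨⟨⟨hS1, hS2⟩, hT1, hT2⟩, hdom⟩ := hp
      have h := not_dom_iff.mp hdom
      have hc := reflPair_cards h
      have hsub := swapAt_subset hS1 hT1 (Nat.find h)
      simp only [mem_coe, mem_product, mem_powersetCard]
      rw [reflPair_eq h] at hc ⊢
      exact ⟨⟨hsub.1, by omega⟩, hsub.2, by omega⟩
    · rintro ⟨S, T⟩ hp
      simp only [mem_coe, mem_product, mem_powersetCard] at hp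
      obtain ⟨⟨hS1, hS2⟩, hT1, hT2⟩ := hp
      have h : ∃ k, pref S k < pref T k := by
        refine ⟨n, ?_⟩
        rw [pref_eq_card hS1 (by omega), pref_eq_card hT1 (by omega)]
        omega
      have hc := reflPair_cards h
      have hsub := swapAt_subset hS1 hT1 (Nat.find h)
      obtain ⟨h', hfind⟩ := reflPair_violation h
      simp only [mem_coe, mem_filter, mem_product, mem_powersetCard]
      refine ⟨?_, ?_⟩
      · rw [reflPair_eq h] at hc ⊢
        exact ⟨⟨hsub.1, by omega⟩, hsub.2, by omega⟩
      · exact not_dom_iff.mpr h'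
    · rintro ⟨S, T⟩ hp
      simp only [mem_coe, mem_filter, mem_product, mem_powersetCard] at hp
      exact reflPair_involution (not_dom_iff.mp hp.2)
    · rintro ⟨S, T⟩ hp
      simp only [mem_coe, mem_product, mem_powersetCard] at hp
      obtain ⟨⟨hS1, hS2⟩, hT1, hT2⟩ := hp
      have h : ∃ k, pref S k < pref T k := by
        refine ⟨n, ?_⟩
        rw [pref_eq_card hS1 (by omega), pref_eq_card hT1 (by omega)]
        omega
      exact reflPair_involution h
  rw [hbad, card_product, card_powersetCard, card_powersetCard, card_range] at hsplit
  omega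

private lemma stepC (n j : ℕ) (hj1 : 1 ≤ j) (hj : j ≤ n) :
    (n+1).choose (j+1) * (n+1).choose j + (n+1) * (n.choose (j-1) * n.choose (j+1))
      = (n+1) * (n.choose j * n.choose j) := by
  obtain ⟨a, rfl⟩ : ∃ a, j = a + 1 := ⟨j - 1, by omega⟩
  rcases Nat.lt_or_ge (a + 1) n with hlt | hge
  · -- j + 1 ≤ n
    obtain ⟨d, rfl⟩ : ∃ d, n = a + 2 + d := ⟨n - (a+2), by omega⟩
    have key : ((a+2+d+1).choose (a+2) * (a+2+d+1).choose (a+1)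
          + (a+2+d+1) * ((a+2+d).choose a * (a+2+d).choose (a+2)) : ℚ)
        = (a+2+d+1) * ((a+2+d).choose (a+1) * (a+2+d).choose (a+1)) := by
      rw [Nat.cast_choose ℚ (show a+2 ≤ a+2+d+1 by omega),
          Nat.cast_choose ℚ (show a+1 ≤ a+2+d+1 by omega),
          Nat.cast_choose ℚ (show a ≤ a+2+d by omega),
          Nat.cast_choose ℚ (show a+2 ≤ a+2+d by omega),
          Nat.cast_choose ℚ (show a+1 ≤ a+2+d by omega)]
      simp only [show a+2+d+1-(a+2) = d+1 from by omega, show a+2+d+1-(a+1) = d+2 from by omega,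
        show a+2+d-a = d+2 from by omega, show a+2+d-(a+2) = d from by omega,
        show a+2+d-(a+1) = d+1 from by omega]
      have f1 : ((a+2+d+1).factorial : ℚ) = (a+2+d+1) * (a+2+d).factorial := by
        rw [show a+2+d+1 = (a+2+d)+1 from rfl, Nat.factorial_succ]; push_cast; ring
      have f2 : ((a+2).factorial : ℚ) = (a+2) * ((a+1) * a.factorial) := by
        rw [show a+2 = (a+1)+1 by ring, Nat.factorial_succ, Nat.factorial_succ]; push_cast; ring
      have f3 : ((a+1).factorial : ℚ) = (a+1) * a.factorial := by
        rw [Nat.factorial_succ]; push_cast; ring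
      have f4 : ((d+2).factorial : ℚ) = (d+2) * ((d+1) * d.factorial) := by
        rw [show d+2 = (d+1)+1 by ring, Nat.factorial_succ, Nat.factorial_succ]; push_cast; ring
      have f5 : ((d+1).factorial : ℚ) = (d+1) * d.factorial := by
        rw [Nat.factorial_succ]; push_cast; ring
      rw [f1, f2, f3, f4, f5]
      have ha : (a.factorial : ℚ) ≠ 0 := by positivity
      have hd : (d.factorial : ℚ) ≠ 0 := by positivity
      have hf : (((a+2+d).factorial : ℕ) : ℚ) ≠ 0 := by positivity
      field_simp
      ring
    have key' := key
    push_cast at key'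
    exact_mod_cast key'
  · -- j = n
    have hn : n = a + 1 := by omega
    subst hn
    rw [Nat.choose_eq_zero_of_lt (by omega : a + 1 < a + 2)]
    simp [Nat.choose_succ_self_right]


theorem stmt15 (n j : ℕ) (hj : j ≤ n) :
    (n + 1) * ncCount (wordRA 1 n) j
      = Nat.choose (n + 1) (j + 1) * Nat.choose (n + 1) j := by
  rcases Nat.eq_zero_or_pos j with rfl | hj1
  · rw [stepA]
    have h1 : (((range n).powersetCard 0) ×ˢ ((range n).powersetCard 0)).filter
        (fun p => Dom p.1 p.2) = {(∅, ∅)} := by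
      ext ⟨S, T⟩
      simp only [mem_filter, mem_product, mem_powersetCard, mem_singleton, Prod.mk.injEq,
        card_eq_zero]
      constructor
      · rintro ⟨⟨⟨-, h1⟩, -, h2⟩, -⟩; exact ⟨h1, h2⟩
      · rintro ⟨rfl, rfl⟩
        refine ⟨⟨⟨empty_subset _, rfl⟩, empty_subset _, rfl⟩, fun k => ?_⟩
        simp [pref]
    rw [h1]
    simp [Nat.choose_one_right]
  · have hA := stepA n j
    have hB := stepB n j hj1
    have hC := stepC n j hj1 hj
    rw [hA]
    have h2 : (n + 1) * ((((range n).powersetCard j) ×ˢ ((range n).powersetCard j)).filter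
          (fun p => Dom p.1 p.2)).card + (n+1) * (n.choose (j-1) * n.choose (j+1))
        = (n+1) * (n.choose j * n.choose j) := by
      rw [← Nat.mul_add, hB]
    have h3 : (n + 1) * ((((range n).powersetCard j) ×ˢ ((range n).powersetCard j)).filter
          (fun p => Dom p.1 p.2)).card + (n+1) * (n.choose (j-1) * n.choose (j+1))
        = (n+1).choose (j+1) * (n+1).choose j + (n+1) * (n.choose (j-1) * n.choose (j+1)) := by
      rw [h2, ← hC]
    exact Nat.add_right_cancel h3
end
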